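/- arXiv:1509.06543 — 6 statements merged into one kernel-verified Lean document; each statement's English description precedes it below -/
import Mathlib

section
/- Let U and V be unitary operators on ℂ^n ⊗ ℂ^k. The following are equivalent: (1) for every density matrix β ∈ M_k^{1,+}(ℂ) and every density matrix ρ ∈ M_n^{1,+}(ℂ), L_{U,β}(ρ) = L_{V,β}(ρ); (2) there exists a unitary operator W on ℂ^k such that U = (I_n ⊗ W) V. -/
open Matrix Kronecker ComplexOrder

noncomputable section

namespace BipartiteUnitary

/-- A square complex matrix is unitary. -/
def IsUnitary {m : Type*} [Fintype m] [DecidableEq m] (U : Matrix m m ℂ) : Prop :=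
  U * Uᴴ = 1 ∧ Uᴴ * U = 1

/-- A density matrix: positive semidefinite with unit trace. -/
def IsDensity {m : Type*} [Fintype m] (β : Matrix m m ℂ) : Prop :=
  β.PosSemidef ∧ β.trace = 1

/-- Partial trace over the second tensor factor. -/
def trB {n k : Type*} [Fintype k] (M : Matrix (n × k) (n × k) ℂ) : Matrix n n ℂ :=
  fun i j => ∑ s, M (i, s) (j, s)

/-- Partial trace over the first tensor factor. -/
def trA {n k : Type*} [Fintype n] (M : Matrix (n × k) (n × k) ℂ) : Matrix k k ℂ :=
  fun s t => ∑ i, M (i, s) (i, t)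

/-- The quantum channel `L_{U,β}(X) = Tr_B (U (X ⊗ β) U*)`. -/
def channel {n k : Type*} [Fintype n] [Fintype k]
    (U : Matrix (n × k) (n × k) ℂ) (β : Matrix k k ℂ) (X : Matrix n n ℂ) :
    Matrix n n ℂ :=
  trB (U * (X ⊗ₖ β) * Uᴴ)

/-- The partial transpose `X^Γ = (id ⊗ t)(X)` with respect to the second factor. -/
def pt {n k : Type*} (U : Matrix (n × k) (n × k) ℂ) : Matrix (n × k) (n × k) ℂ :=
  fun p q => U (p.1, q.2) (q.1, p.2)

/-- A family of vectors forming an orthonormal basis of `ℂ^k`. -/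
def ONB {k : Type*} [Fintype k] [DecidableEq k] (e : k → k → ℂ) : Prop :=
  ∀ i j, (∑ s, star (e i s) * e j s) = if i = j then (1 : ℂ) else 0

/-- A partial isometry. -/
def IsPartialIso {m : Type*} [Fintype m] [DecidableEq m] (R : Matrix m m ℂ) : Prop :=
  R * Rᴴ * R = R

/-- Membership in `𝒰^A_{block-diag}`: `U = ∑ i, U_i ⊗ e_i f_i*` with `U_i` unitary
and `{e_i}, {f_i}` orthonormal bases of `ℂ^k`. -/
def memUA {n k : ℕ} (U : Matrix (Fin n × Fin k) (Fin n × Fin k) ℂ) : Prop :=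
  ∃ (Us : Fin k → Matrix (Fin n) (Fin n) ℂ) (e f : Fin k → Fin k → ℂ),
    (∀ i, IsUnitary (Us i)) ∧ ONB e ∧ ONB f ∧
    U = ∑ i, Us i ⊗ₖ vecMulVec (e i) (star (f i))

/-- Membership in `ℳ^A_{block-diag}`: `X = ∑ i, X_i ⊗ e_i f_i*` with arbitrary `X_i`. -/
def memMA {n k : ℕ} (X : Matrix (Fin n × Fin k) (Fin n × Fin k) ℂ) : Prop :=
  ∃ (Xs : Fin k → Matrix (Fin n) (Fin n) ℂ) (e f : Fin k → Fin k → ℂ),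
    ONB e ∧ ONB f ∧ X = ∑ i, Xs i ⊗ₖ vecMulVec (e i) (star (f i))

/-- Membership in `𝒰^B_{block-diag}`. -/
def memUB {n k : ℕ} (U : Matrix (Fin n × Fin k) (Fin n × Fin k) ℂ) : Prop :=
  ∃ (Us : Fin n → Matrix (Fin k) (Fin k) ℂ) (e f : Fin n → Fin n → ℂ),
    (∀ i, IsUnitary (Us i)) ∧ ONB e ∧ ONB f ∧
    U = ∑ i, vecMulVec (e i) (star (f i)) ⊗ₖ Us i

/-- Membership in `ℳ^B_{block-diag}`. -/
def memMB {n k : ℕ} (X : Matrix (Fin n × Fin k) (Fin n × Fin k) ℂ) : Prop :=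
  ∃ (Xs : Fin n → Matrix (Fin k) (Fin k) ℂ) (e f : Fin n → Fin n → ℂ),
    ONB e ∧ ONB f ∧ X = ∑ i, vecMulVec (e i) (star (f i)) ⊗ₖ Xs i

/-! ### Auxiliary lemmas -/

section Aux

set_option linter.unusedSectionVars false

variable {m : Type*} [Fintype m] [DecidableEq m]

lemma vecMulVec_eq_mul_conj (v : m → ℂ) :
    vecMulVec v (star v) = (replicateCol Unit v) * (replicateCol Unit v)ᴴ := by
  ext i j
  simp [vecMulVec_apply, mul_apply, replicateCol]

lemma posSemidef_vecMulVec (v : m → ℂ) : (vecMulVec v (star v)).PosSemidef := by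
  rw [vecMulVec_eq_mul_conj]
  exact posSemidef_self_mul_conjTranspose _

lemma trace_vecMulVec (v : m → ℂ) :
    (vecMulVec v (star v)).trace = ((∑ i, Complex.normSq (v i) : ℝ) : ℂ) := by
  simp [Matrix.trace, Matrix.diag, vecMulVec_apply, Complex.mul_conj]

lemma vecMulVec_self_mem_span (v : m → ℂ) :
    vecMulVec v (star v) ∈ Submodule.span ℂ {β : Matrix m m ℂ | IsDensity β} := by
  rcases eq_or_ne v 0 with rfl | hv
  · have : vecMulVec (0 : m → ℂ) (star (0 : m → ℂ)) = 0 := by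
      ext i j; simp [vecMulVec_apply]
    rw [this]; exact Submodule.zero_mem _
  · set t : ℝ := ∑ i, Complex.normSq (v i) with ht
    have htpos : 0 < t := by
      have : ∃ i, v i ≠ 0 := by
        by_contra h
        push_neg at h
        exact hv (funext h)
      obtain ⟨i, hi⟩ := this
      exact Finset.sum_pos' (fun j _ => Complex.normSq_nonneg _)
        ⟨i, Finset.mem_univ i, by simpa using Complex.normSq_pos.2 hi⟩
    set a : ℝ := (Real.sqrt t)⁻¹ with ha
    set u : m → ℂ := fun i => (a : ℂ) * v i with hu
    have ha2 : (a : ℝ)^2 = t⁻¹ := by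
      rw [ha, ← Real.sqrt_inv]
      exact Real.sq_sqrt (by positivity)
    have hdens : IsDensity (vecMulVec u (star u)) := by
      refine ⟨posSemidef_vecMulVec _, ?_⟩
      rw [trace_vecMulVec]
      have : ∑ i, Complex.normSq (u i) = a^2 * t := by
        rw [Finset.mul_sum]
        refine Finset.sum_congr rfl fun i _ => ?_
        simp [hu, Complex.normSq_mul, sq]
      rw [this, ha2, inv_mul_cancel₀ htpos.ne']
      norm_num
    have hEq : vecMulVec v (star v) = (t : ℂ) • vecMulVec u (star u) := by
      ext i j
      simp only [vecMulVec_apply, Matrix.smul_apply, Pi.star_apply, hu, smul_eq_mul]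
      have : (t : ℂ) * ((a:ℂ) * v i * star ((a:ℂ) * v j))
          = ((t * (a^2) : ℝ) : ℂ) * (v i * star (v j)) := by
        push_cast
        simp only [star_mul', Complex.star_def, Complex.conj_ofReal]
        ring
      rw [this, ha2, mul_inv_cancel₀ htpos.ne']
      simp
    rw [hEq]
    exact Submodule.smul_mem _ _ (Submodule.subset_span hdens)

lemma vecMulVec_star_mem_span (x y : m → ℂ) :
    vecMulVec x (star y) ∈ Submodule.span ℂ {β : Matrix m m ℂ | IsDensity β} := by
  have key : vecMulVec x (star y) = (4:ℂ)⁻¹ •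
      (vecMulVec (x + y) (star (x + y))
        + Complex.I • vecMulVec (x + Complex.I • y) (star (x + Complex.I • y))
        - vecMulVec (x - y) (star (x - y))
        - Complex.I • vecMulVec (x - Complex.I • y) (star (x - Complex.I • y))) := by
    ext i j
    simp only [vecMulVec_apply, Matrix.smul_apply, Matrix.sub_apply, Matrix.add_apply,
      Pi.star_apply, Pi.add_apply, Pi.sub_apply, Pi.smul_apply, smul_eq_mul,
      Complex.star_def, map_add, map_sub, _root_.map_mul, Complex.conj_I]
    ring_nf
    simp only [Complex.I_sq]
    ring
  rw [key]
  refine Submodule.smul_mem _ _ (Submodule.sub_mem _ (Submodule.sub_mem _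
    (Submodule.add_mem _ ?_ (Submodule.smul_mem _ _ ?_)) ?_) (Submodule.smul_mem _ _ ?_))
    <;> exact vecMulVec_self_mem_span _

lemma stdBasisMatrix_eq_smul_vecMulVec (i j : m) (c : ℂ) :
    Matrix.single i j c = c • vecMulVec (Pi.single i 1) (star (Pi.single j (1:ℂ))) := by
  ext a b
  simp only [Matrix.single, of_apply, Matrix.smul_apply, vecMulVec_apply, Pi.star_apply,
    Pi.single_apply, smul_eq_mul, apply_ite (star : ℂ → ℂ), star_one, star_zero]
  split_ifs <;> simp_all

lemma mem_span_density (A : Matrix m m ℂ) :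
    A ∈ Submodule.span ℂ {β : Matrix m m ℂ | IsDensity β} := by
  have hA := Matrix.matrix_eq_sum_single A
  rw [hA]
  refine Submodule.sum_mem _ fun i _ => Submodule.sum_mem _ fun j _ => ?_
  rw [stdBasisMatrix_eq_smul_vecMulVec]
  exact Submodule.smul_mem _ _ (vecMulVec_star_mem_span _ _)

variable {n k : Type*} [Fintype n] [Fintype k] [DecidableEq n] [DecidableEq k]

lemma trB_add (M N : Matrix (n × k) (n × k) ℂ) : trB (M + N) = trB M + trB N := by
  ext i j
  simp [trB, Finset.sum_add_distrib]

lemma trB_smul (c : ℂ) (M : Matrix (n × k) (n × k) ℂ) : trB (c • M) = c • trB M := by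
  ext i j
  simp [trB, Finset.mul_sum]

lemma trB_zero : trB (0 : Matrix (n × k) (n × k) ℂ) = 0 := by
  ext i j
  simp [trB]

lemma trB_conj_one_kron (W : Matrix k k ℂ) (hW : Wᴴ * W = 1) (M : Matrix (n × k) (n × k) ℂ) :
    trB (((1 : Matrix n n ℂ) ⊗ₖ W) * M * ((1 : Matrix n n ℂ) ⊗ₖ W)ᴴ) = trB M := by
  ext i j
  have key : ∀ t u : k, (∑ s, star (W s u) * W s t) = if u = t then 1 else 0 := by
    intro t u
    have := congrFun (congrFun hW u) t
    simpa [mul_apply, conjTranspose_apply, one_apply] using this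
  simp only [trB, mul_apply, conjTranspose_apply, kroneckerMap_apply, one_apply,
    Fintype.sum_prod_type, star_mul', ite_mul, one_mul, zero_mul, mul_ite, mul_zero,
    apply_ite (star : ℂ → ℂ), star_one, star_zero, Finset.sum_ite_eq, Finset.sum_ite_eq',
    Finset.mem_univ, if_true]
  simp only [Finset.sum_ite_irrel, Finset.sum_const_zero, Finset.sum_ite_eq,
    Finset.mem_univ, if_true]
  rw [Finset.sum_comm]
  refine Finset.sum_congr rfl fun x_1 _ => ?_
  have h1 : ∀ x : k, (∑ x_2, W x x_2 * M (i, x_2) (j, x_1)) * star (W x x_1)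
      = ∑ x_2, star (W x x_1) * W x x_2 * M (i, x_2) (j, x_1) := by
    intro x; rw [Finset.sum_mul]; exact Finset.sum_congr rfl fun x_2 _ => by ring
  simp_rw [h1]
  rw [Finset.sum_comm]
  have h2 : ∀ x_2 : k, (∑ x : k, star (W x x_1) * W x x_2 * M (i, x_2) (j, x_1))
      = (if x_1 = x_2 then 1 else 0) * M (i, x_2) (j, x_1) := by
    intro x_2
    rw [← Finset.sum_mul, key]
  simp_rw [h2]
  simp

lemma star_cond (M : Matrix (n × k) (n × k) ℂ)
    (h : ∀ Y, trB (M * Y * Mᴴ) = trB Y) (i j a b : n) (t u : k) :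
    ∑ s, M (i,s) (a,t) * star (M (j,s) (b,u))
      = if i = a ∧ j = b ∧ t = u then 1 else 0 := by
  have H := congrFun (congrFun (h (Matrix.single (a,t) (b,u) 1)) i) j
  simp only [trB, mul_apply, conjTranspose_apply, Matrix.single, of_apply,
    mul_ite, mul_zero, mul_one, ite_mul, zero_mul, one_mul, ite_and,
    Finset.sum_ite_irrel, Finset.sum_const_zero, Finset.sum_ite_eq, Finset.sum_ite_eq',
    Finset.mem_univ, if_true, Prod.mk.injEq] at H
  rw [H]
  split_ifs <;> try rfl
  all_goals tauto

lemma stdBasisMatrix_kron (a b : n) (t u : k) (c : ℂ) :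
    Matrix.single ((a,t) : n × k) ((b,u) : n × k) c
      = Matrix.single a b c ⊗ₖ Matrix.single t u 1 := by
  ext ⟨i,s⟩ ⟨j,v⟩
  simp only [Matrix.single, of_apply, kroneckerMap_apply, Prod.mk.injEq]
  split_ifs <;> simp_all

lemma mem_span_kron (X : Matrix (n × k) (n × k) ℂ) :
    X ∈ Submodule.span ℂ
      {Y : Matrix (n × k) (n × k) ℂ | ∃ A B, Y = A ⊗ₖ B} := by
  rw [Matrix.matrix_eq_sum_single X]
  refine Submodule.sum_mem _ fun p _ => Submodule.sum_mem _ fun q _ => ?_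
  obtain ⟨a, t⟩ := p
  obtain ⟨b, u⟩ := q
  rw [stdBasisMatrix_kron]
  exact Submodule.subset_span ⟨_, _, rfl⟩

end Aux

/-- two bipartite unitaries induce the same channel for every ancilla
state iff they differ by a unitary acting on the ancilla. -/
theorem stmt0 (n k : ℕ) (hn : 0 < n) (hk : 0 < k)
    (U V : Matrix (Fin n × Fin k) (Fin n × Fin k) ℂ)
    (hU : IsUnitary U) (hV : IsUnitary V) :
    (∀ β : Matrix (Fin k) (Fin k) ℂ, IsDensity β →
      ∀ ρ : Matrix (Fin n) (Fin n) ℂ, IsDensity ρ → channel U β ρ = channel V β ρ)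
    ↔ ∃ W : Matrix (Fin k) (Fin k) ℂ, IsUnitary W ∧
        U = ((1 : Matrix (Fin n) (Fin n) ℂ) ⊗ₖ W) * V := by
  constructor
  · intro h
    -- Step 1: extend to all matrices A (second factor still a density)
    have h1 : ∀ β : Matrix (Fin k) (Fin k) ℂ, IsDensity β →
        ∀ A : Matrix (Fin n) (Fin n) ℂ,
          trB (U * (A ⊗ₖ β) * Uᴴ) = trB (V * (A ⊗ₖ β) * Vᴴ) := by
      intro β hβ A
      induction mem_span_density A using Submodule.span_induction with
      | mem ρ hρ => exact h β hβ ρ hρ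
      | zero => simp [zero_kronecker, Matrix.mul_zero, Matrix.zero_mul, trB_zero]
      | add x y hx hy hx' hy' =>
          simp only [add_kronecker, Matrix.mul_add, Matrix.add_mul, trB_add, hx', hy']
      | smul c x hx hx' =>
          simp only [smul_kronecker, mul_smul_comm, smul_mul_assoc, trB_smul, hx']
    -- Step 2: extend to all matrices B in the second factor
    have h2 : ∀ (A : Matrix (Fin n) (Fin n) ℂ) (B : Matrix (Fin k) (Fin k) ℂ),
        trB (U * (A ⊗ₖ B) * Uᴴ) = trB (V * (A ⊗ₖ B) * Vᴴ) := by
      intro A B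
      induction mem_span_density B using Submodule.span_induction with
      | mem β hβ => exact h1 β hβ A
      | zero => simp [kronecker_zero, Matrix.mul_zero, Matrix.zero_mul, trB_zero]
      | add x y hx hy hx' hy' =>
          simp only [kronecker_add, Matrix.mul_add, Matrix.add_mul, trB_add, hx', hy']
      | smul c x hx hx' =>
          simp only [kronecker_smul, mul_smul_comm, smul_mul_assoc, trB_smul, hx']
    -- Step 3: extend to all matrices X
    have hall : ∀ X : Matrix (Fin n × Fin k) (Fin n × Fin k) ℂ,
        trB (U * X * Uᴴ) = trB (V * X * Vᴴ) := by
      intro X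
      induction mem_span_kron X using Submodule.span_induction with
      | mem Y hY => obtain ⟨A, B, rfl⟩ := hY; exact h2 A B
      | zero => simp [Matrix.mul_zero, Matrix.zero_mul, trB_zero]
      | add x y hx hy hx' hy' =>
          simp only [Matrix.mul_add, Matrix.add_mul, trB_add, hx', hy']
      | smul c x hx hx' =>
          simp only [mul_smul_comm, smul_mul_assoc, trB_smul, hx']
    -- Step 4: M := U Vᴴ satisfies trB (M Y Mᴴ) = trB Y
    set M : Matrix (Fin n × Fin k) (Fin n × Fin k) ℂ := U * Vᴴ with hMdef
    have hM : ∀ Y, trB (M * Y * Mᴴ) = trB Y := by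
      intro Y
      have e1 : U * (Vᴴ * Y * V) * Uᴴ = M * Y * Mᴴ := by
        rw [hMdef, conjTranspose_mul, conjTranspose_conjTranspose]
        simp only [Matrix.mul_assoc]
      have e2 : V * (Vᴴ * Y * V) * Vᴴ = Y := by
        simp only [← Matrix.mul_assoc]
        rw [hV.1, Matrix.one_mul, Matrix.mul_assoc, hV.1, Matrix.mul_one]
      have := hall (Vᴴ * Y * V)
      rw [e1, e2] at this
      exact this
    have hc := star_cond M hM
    -- Step 5: block structure
    set i₀ : Fin n := ⟨0, hn⟩
    set W : Matrix (Fin k) (Fin k) ℂ := fun s t => M (i₀, s) (i₀, t) with hWdef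
    have hWunit : Wᴴ * W = 1 := by
      ext t u
      have := hc i₀ i₀ i₀ i₀ u t
      simp only [true_and] at this
      rw [mul_apply, one_apply]
      calc ∑ s, Wᴴ t s * W s u = ∑ s, M (i₀, s) (i₀, u) * star (M (i₀, s) (i₀, t)) := by
            refine Finset.sum_congr rfl fun s _ => ?_
            rw [conjTranspose_apply]
            simp only [hWdef]
            ring
        _ = if u = t then 1 else 0 := this
        _ = if t = u then 1 else 0 := by simp [eq_comm]
    have hWWH : W * Wᴴ = 1 := mul_eq_one_comm.mp hWunit
    have hzero : ∀ (i a : Fin n) (s t : Fin k), i ≠ a → M (i, s) (a, t) = 0 := by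
      intro i a s t hia
      have h' := hc i i a a t t
      rw [if_neg (by tauto)] at h'
      have hsum : ∑ s, Complex.normSq (M (i, s) (a, t)) = 0 := by
        have : ((∑ s, Complex.normSq (M (i, s) (a, t)) : ℝ) : ℂ) = 0 := by
          push_cast
          rw [← h']
          exact Finset.sum_congr rfl fun s _ => (Complex.mul_conj _).symm
        exact_mod_cast this
      have := (Finset.sum_eq_zero_iff_of_nonneg
        (fun s _ => Complex.normSq_nonneg (M (i, s) (a, t)))).mp hsum s (Finset.mem_univ s)
      exact Complex.normSq_eq_zero.mp this
    have hblock : ∀ (i : Fin n) (s t : Fin k), M (i, s) (i, t) = W s t := by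
      intro i
      set Wi : Matrix (Fin k) (Fin k) ℂ := fun s t => M (i, s) (i, t) with hWi
      have hWHWi : Wᴴ * Wi = 1 := by
        ext u t
        have := hc i i₀ i i₀ t u
        simp only [true_and] at this
        rw [mul_apply, one_apply]
        calc ∑ s, Wᴴ u s * Wi s t = ∑ s, M (i, s) (i, t) * star (M (i₀, s) (i₀, u)) := by
              refine Finset.sum_congr rfl fun s _ => ?_
              rw [conjTranspose_apply]
              simp only [hWdef, hWi]
              ring
          _ = if t = u then 1 else 0 := this
          _ = if u = t then 1 else 0 := by simp [eq_comm]
      have : Wi = W := by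
        calc Wi = (W * Wᴴ) * Wi := by rw [hWWH, Matrix.one_mul]
          _ = W * (Wᴴ * Wi) := by rw [Matrix.mul_assoc]
          _ = W := by rw [hWHWi, Matrix.mul_one]
      intro s t
      exact congrFun (congrFun this s) t
    have hMeq : M = (1 : Matrix (Fin n) (Fin n) ℂ) ⊗ₖ W := by
      ext ⟨i, s⟩ ⟨a, t⟩
      rw [kroneckerMap_apply, one_apply]
      by_cases hia : i = a
      · subst hia
        rw [if_pos rfl, one_mul]
        exact hblock i s t
      · rw [if_neg hia, zero_mul]
        exact hzero i a s t hia
    refine ⟨W, ⟨hWWH, hWunit⟩, ?_⟩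
    rw [← hMeq, hMdef, Matrix.mul_assoc, hV.2, Matrix.mul_one]
  · rintro ⟨W, hW, rfl⟩ β hβ ρ hρ
    unfold channel
    have e : (((1 : Matrix (Fin n) (Fin n) ℂ) ⊗ₖ W) * V) * (ρ ⊗ₖ β)
        * ((((1 : Matrix (Fin n) (Fin n) ℂ) ⊗ₖ W)) * V)ᴴ
        = ((1 : Matrix (Fin n) (Fin n) ℂ) ⊗ₖ W) * (V * (ρ ⊗ₖ β) * Vᴴ)
          * ((1 : Matrix (Fin n) (Fin n) ℂ) ⊗ₖ W)ᴴ := by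
      rw [conjTranspose_mul]
      simp only [Matrix.mul_assoc]
    rw [e, trB_conj_one_kron W hW.2]

end BipartiteUnitary
end
end

section
/- If k is not an integer multiple of n (i.e. k ≠ rn for every positive integer r), then there exists no unitary operator U on ℂ^n ⊗ ℂ^k such that for every density matrix β ∈ M_k^{1,+}(ℂ) the channel L_{U,β} is constant, i.e. L_{U,β}(ρ) = L_{U,β}(σ) for all density matrices ρ, σ ∈ M_n^{1,+}(ℂ). -/
open Matrix Kronecker ComplexOrder

noncomputable section

namespace BipartiteUnitary

lemma posSemidef_outer {m : Type*} [Fintype m] (v : m → ℂ) :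
    (vecMulVec v (star v)).PosSemidef := by
  refine posSemidef_iff_dotProduct_mulVec.mpr ⟨?_, fun x => ?_⟩
  · ext a b
    simp [conjTranspose_apply, vecMulVec_apply, mul_comm]
  · have hx : (vecMulVec v (star v)).mulVec x = (star v ⬝ᵥ x) • v := by
      funext a
      simp only [mulVec, dotProduct, vecMulVec_apply, Pi.smul_apply, smul_eq_mul,
        Finset.sum_mul]
      exact Finset.sum_congr rfl fun b _ => by simp [Pi.star_apply]; ring
    rw [hx]
    have : star x ⬝ᵥ ((star v ⬝ᵥ x) • v) = (star v ⬝ᵥ x) * star (star v ⬝ᵥ x) := by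
      rw [dotProduct_smul]
      simp only [smul_eq_mul]
      congr 1
      simp only [dotProduct, star_sum, star_mul', star_star, Pi.star_apply]
      exact Finset.sum_congr rfl fun b _ => mul_comm _ _
    rw [this]
    exact mul_star_self_nonneg _

lemma trace_outer {m : Type*} [Fintype m] (v : m → ℂ) :
    (vecMulVec v (star v)).trace = ∑ s, v s * star (v s) := by
  simp [trace, Matrix.diag, vecMulVec_apply]

lemma isDensity_outer {m : Type*} [Fintype m] (v : m → ℂ)
    (hv : ∑ s, v s * star (v s) = 1) : IsDensity (vecMulVec v (star v)) :=
  ⟨posSemidef_outer v, by rw [trace_outer, hv]⟩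

/-- the vector `(e_i + c e_j)/√2`. -/
def uv {m : ℕ} (i j : Fin m) (c : ℂ) : Fin m → ℂ :=
  fun a => if a = i then ((Real.sqrt 2)⁻¹ : ℝ) else if a = j then ((Real.sqrt 2)⁻¹ : ℝ) * c else 0

lemma hr2 : (((Real.sqrt 2)⁻¹ : ℝ) : ℂ) * (((Real.sqrt 2)⁻¹ : ℝ) : ℂ) = 1/2 := by
  rw [← Complex.ofReal_mul, ← mul_inv, Real.mul_self_sqrt (by norm_num)]
  norm_num

lemma isDensity_uv {m : ℕ} (i j : Fin m) (hij : i ≠ j) (c : ℂ) (hc : c * star c = 1) :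
    IsDensity (vecMulVec (uv i j c) (star (uv i j c))) := by
  refine isDensity_outer _ ?_
  rw [show (Finset.univ : Finset (Fin m)) = ({i, j} ∪ (Finset.univ \ {i, j}) : Finset (Fin m)) by
    simp]
  rw [Finset.sum_union (Finset.disjoint_sdiff)]
  have h2 : ∑ s ∈ Finset.univ \ {i, j}, uv i j c s * star (uv i j c s) = 0 := by
    refine Finset.sum_eq_zero fun s hs => ?_
    simp only [Finset.mem_sdiff, Finset.mem_insert, Finset.mem_singleton, not_or] at hs
    simp [uv, hs.2.1, hs.2.2]
  rw [h2, add_zero, Finset.sum_pair hij]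
  simp only [uv, if_pos rfl, if_neg (Ne.symm hij), if_neg hij, if_true, star_mul',
    RCLike.star_def, Complex.conj_ofReal]
  have hc' : c * (starRingEnd ℂ) c = 1 := hc
  linear_combination (1 + c * (starRingEnd ℂ) c) * hr2 + (1/2 : ℂ) * hc'

lemma stdBasis_combo {m : ℕ} (i j : Fin m) (hij : i ≠ j) :
    (Matrix.single i j 1 : Matrix (Fin m) (Fin m) ℂ) =
      (1/2 : ℂ) • (vecMulVec (uv i j 1) (star (uv i j 1))
          - vecMulVec (uv i j (-1)) (star (uv i j (-1))))
        - (Complex.I/2) • (vecMulVec (uv i j (-Complex.I)) (star (uv i j (-Complex.I)))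
          - vecMulVec (uv i j Complex.I) (star (uv i j Complex.I))) := by
  have h2 := hr2
  ext a b
  simp only [Matrix.single, of_apply, Matrix.sub_apply, Matrix.smul_apply, Pi.star_apply,
    vecMulVec_apply, uv, RCLike.star_def, apply_ite (starRingEnd ℂ), _root_.map_mul,
    Complex.conj_ofReal, _root_.map_one, map_neg, Complex.conj_I, map_zero, smul_eq_mul]
  split_ifs <;>
    first
      | (exfalso; grind)
      | ring1
      | ((try simp only [Complex.I_sq]); first
           | ring1
           | linear_combination 2*h2
           | linear_combination (-2 : ℂ)*h2
           | linear_combination h2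
           | linear_combination (-1 : ℂ)*h2
           | linear_combination (-2 : ℂ)*h2 +
               (((((Real.sqrt 2)⁻¹ : ℝ)) : ℂ) * ((((Real.sqrt 2)⁻¹ : ℝ)) : ℂ)) * Complex.I_mul_I
           | linear_combination 2*h2 -
               (((((Real.sqrt 2)⁻¹ : ℝ)) : ℂ) * ((((Real.sqrt 2)⁻¹ : ℝ)) : ℂ)) * Complex.I_mul_I
           | linear_combination
               (-(((((Real.sqrt 2)⁻¹ : ℝ)) : ℂ) * ((((Real.sqrt 2)⁻¹ : ℝ)) : ℂ))) * Complex.I_mul_I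
           | linear_combination
               (((((Real.sqrt 2)⁻¹ : ℝ)) : ℂ) * ((((Real.sqrt 2)⁻¹ : ℝ)) : ℂ)) * Complex.I_mul_I)

variable {n k : ℕ}

lemma channel_apply (U : Matrix (Fin n × Fin k) (Fin n × Fin k) ℂ)
    (β : Matrix (Fin k) (Fin k) ℂ) (X : Matrix (Fin n) (Fin n) ℂ) (a b : Fin n) :
    channel U β X a b =
      ∑ s : Fin k, ∑ p : Fin n × Fin k, ∑ q : Fin n × Fin k,
        U (a,s) p * (X p.1 q.1 * β p.2 q.2) * star (U (b,s) q) := by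
  simp only [channel, trB, Matrix.mul_apply, conjTranspose_apply, Finset.sum_mul,
    kroneckerMap_apply]
  refine Finset.sum_congr rfl fun s _ => ?_
  rw [Finset.sum_comm]

lemma channel_std (U : Matrix (Fin n × Fin k) (Fin n × Fin k) ℂ)
    (i j : Fin n) (t t' : Fin k) (a b : Fin n) :
    channel U (Matrix.single t t' 1) (Matrix.single i j 1) a b =
      ∑ s : Fin k, U (a,s) (i,t) * star (U (b,s) (j,t')) := by
  rw [channel_apply]
  have hE : ∀ (p q : Fin n × Fin k),
      Matrix.single i j (1:ℂ) p.1 q.1 * Matrix.single t t' (1:ℂ) p.2 q.2 =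
        (if p = (i,t) then 1 else 0) * (if q = (j,t') then 1 else 0) := by
    rintro ⟨p1,p2⟩ ⟨q1,q2⟩
    by_cases h1 : p1 = i <;> by_cases h2 : p2 = t <;> by_cases h3 : q1 = j <;>
      by_cases h4 : q2 = t' <;> simp [Matrix.single, *, Prod.ext_iff] <;> aesop
  simp only [hE]
  refine Finset.sum_congr rfl fun s _ => ?_
  simp [mul_ite, ite_mul, Finset.sum_ite_eq']


lemma channel_smul_X (U : Matrix (Fin n × Fin k) (Fin n × Fin k) ℂ)
    (β : Matrix (Fin k) (Fin k) ℂ) (c : ℂ) (X : Matrix (Fin n) (Fin n) ℂ) :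
    channel U β (c • X) = c • channel U β X := by
  ext a b
  simp only [channel_apply, Matrix.smul_apply, smul_eq_mul, Finset.mul_sum]
  exact Finset.sum_congr rfl fun s _ => Finset.sum_congr rfl fun p _ =>
    Finset.sum_congr rfl fun q _ => by ring

lemma channel_sub_X (U : Matrix (Fin n × Fin k) (Fin n × Fin k) ℂ)
    (β : Matrix (Fin k) (Fin k) ℂ) (X Y : Matrix (Fin n) (Fin n) ℂ) :
    channel U β (X - Y) = channel U β X - channel U β Y := by
  ext a b
  simp only [channel_apply, Matrix.sub_apply, ← Finset.sum_sub_distrib]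
  exact Finset.sum_congr rfl fun s _ => Finset.sum_congr rfl fun p _ =>
    Finset.sum_congr rfl fun q _ => by ring

lemma channel_smul_B (U : Matrix (Fin n × Fin k) (Fin n × Fin k) ℂ)
    (β : Matrix (Fin k) (Fin k) ℂ) (c : ℂ) (X : Matrix (Fin n) (Fin n) ℂ) :
    channel U (c • β) X = c • channel U β X := by
  ext a b
  simp only [channel_apply, Matrix.smul_apply, smul_eq_mul, Finset.mul_sum]
  exact Finset.sum_congr rfl fun s _ => Finset.sum_congr rfl fun p _ =>
    Finset.sum_congr rfl fun q _ => by ring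

lemma channel_sub_B (U : Matrix (Fin n × Fin k) (Fin n × Fin k) ℂ)
    (β γ : Matrix (Fin k) (Fin k) ℂ) (X : Matrix (Fin n) (Fin n) ℂ) :
    channel U (β - γ) X = channel U β X - channel U γ X := by
  ext a b
  simp only [channel_apply, Matrix.sub_apply, ← Finset.sum_sub_distrib]
  exact Finset.sum_congr rfl fun s _ => Finset.sum_congr rfl fun p _ =>
    Finset.sum_congr rfl fun q _ => by ring

lemma isDensity_std {m : ℕ} (t : Fin m) :
    IsDensity (Matrix.single t t 1 : Matrix (Fin m) (Fin m) ℂ) := by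
  have hv : star (Pi.single t (1:ℂ) : Fin m → ℂ) = Pi.single t 1 := by
    funext a
    simp [Pi.single_apply, apply_ite (star : ℂ → ℂ)]
  have : (Matrix.single t t 1 : Matrix (Fin m) (Fin m) ℂ)
      = vecMulVec (Pi.single t 1) (star (Pi.single t 1)) := by
    rw [hv]; exact Matrix.single_eq_single_vecMulVec_single t t
  rw [this]
  refine isDensity_outer _ ?_
  simp [Pi.single_apply, apply_ite (star : ℂ → ℂ)]

lemma channel_std_zero (U : Matrix (Fin n × Fin k) (Fin n × Fin k) ℂ)
    (hconst : ∀ β : Matrix (Fin k) (Fin k) ℂ, IsDensity β →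
      ∀ ρ σ : Matrix (Fin n) (Fin n) ℂ, IsDensity ρ → IsDensity σ →
        channel U β ρ = channel U β σ)
    (i j : Fin n) (hij : i ≠ j) (t t' : Fin k) :
    channel U (Matrix.single t t' 1) (Matrix.single i j 1) = 0 := by
  have d1 : ∀ {m : ℕ} (a b : Fin m) (hab : a ≠ b),
      IsDensity (vecMulVec (uv a b 1) (star (uv a b 1))) :=
    fun a b hab => isDensity_uv a b hab 1 (by simp)
  have d2 : ∀ {m : ℕ} (a b : Fin m) (hab : a ≠ b),
      IsDensity (vecMulVec (uv a b (-1)) (star (uv a b (-1)))) :=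
    fun a b hab => isDensity_uv a b hab (-1) (by simp)
  have d3 : ∀ {m : ℕ} (a b : Fin m) (hab : a ≠ b),
      IsDensity (vecMulVec (uv a b (-Complex.I)) (star (uv a b (-Complex.I)))) :=
    fun a b hab => isDensity_uv a b hab (-Complex.I)
      (by simp [Complex.ext_iff])
  have d4 : ∀ {m : ℕ} (a b : Fin m) (hab : a ≠ b),
      IsDensity (vecMulVec (uv a b Complex.I) (star (uv a b Complex.I))) :=
    fun a b hab => isDensity_uv a b hab Complex.I
      (by simp [Complex.ext_iff])
  have hX : ∀ β : Matrix (Fin k) (Fin k) ℂ, IsDensity β →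
      channel U β (Matrix.single i j 1) = 0 := by
    intro β hβ
    rw [stdBasis_combo i j hij, channel_sub_X, channel_smul_X, channel_smul_X,
      channel_sub_X, channel_sub_X,
      hconst β hβ _ _ (d1 i j hij) (d2 i j hij),
      hconst β hβ _ _ (d3 i j hij) (d4 i j hij)]
    simp
  by_cases htt' : t = t'
  · subst htt'
    exact hX _ (isDensity_std t)
  · rw [stdBasis_combo t t' htt', channel_sub_B, channel_smul_B, channel_smul_B,
      channel_sub_B, channel_sub_B,
      hX _ (d1 t t' htt'), hX _ (d2 t t' htt'), hX _ (d3 t t' htt'), hX _ (d4 t t' htt')]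
    simp

lemma dim_argument {n k : ℕ} (hn : 0 < n) (hk : 0 < k)
    (U : Matrix (Fin n × Fin k) (Fin n × Fin k) ℂ)
    (hU : Uᴴ * U = 1)
    (key : ∀ i j : Fin n, i ≠ j → ∀ t t' : Fin k, ∀ a b : Fin n,
      ∑ s : Fin k, U (a,s) (i,t) * star (U (b,s) (j,t')) = 0) :
    ∃ r : ℕ, 0 < r ∧ k = r * n := by
  classical
  let w : Fin n → Fin n × Fin k → EuclideanSpace ℂ (Fin k) :=
    fun i p => WithLp.toLp 2 (fun s => U (p.1, s) (i, p.2) : Fin k → ℂ)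
  let S : Fin n → Submodule ℂ (EuclideanSpace ℂ (Fin k)) :=
    fun i => Submodule.span ℂ (Set.range (w i))
  have hOrtho : ∀ i j : Fin n, i ≠ j → S i ⟂ S j := by
    intro i j hij
    rw [Submodule.isOrtho_span]
    rintro _ ⟨⟨a, t⟩, rfl⟩ _ ⟨⟨b, t'⟩, rfl⟩
    have h0 := key j i (Ne.symm hij) t' t b a
    rw [PiLp.inner_apply]
    simp only [RCLike.inner_apply]
    rw [← h0]
    exact Finset.sum_congr rfl fun s _ => rfl
  have hfin : ∀ i, k ≤ n * Module.finrank ℂ (S i) := by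
    intro i
    set c : Fin k → (Fin n × Fin k → ℂ) := fun t p => U p (i, t) with hc
    have hli : LinearIndependent ℂ c := by
      rw [Fintype.linearIndependent_iff]
      intro g hg t
      set y : Fin n × Fin k → ℂ := fun q => if q.1 = i then g q.2 else 0 with hy'
      have hUy : U.mulVec y = 0 := by
        funext p
        have hp := congrFun hg p
        simp only [Finset.sum_apply, Pi.smul_apply, smul_eq_mul, Pi.zero_apply, hc] at hp
        calc U.mulVec y p = ∑ q : Fin n × Fin k, U p q * y q := rfl
        _ = ∑ j' : Fin n, ∑ t' : Fin k, U p (j', t') * (if j' = i then g t' else 0) := by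
              rw [Fintype.sum_prod_type]
        _ = ∑ t' : Fin k, U p (i, t') * g t' := by
              rw [Finset.sum_eq_single i]
              · simp
              · intro j' _ hj'; simp [hj']
              · simp
        _ = 0 := by rw [← hp]; exact Finset.sum_congr rfl fun t' _ => mul_comm _ _
      have hy : y = 0 := by
        have h1 : (Uᴴ * U).mulVec y = y := by rw [hU, Matrix.one_mulVec]
        rw [← Matrix.mulVec_mulVec, hUy, Matrix.mulVec_zero] at h1
        exact h1.symm
      have := congrFun hy (i, t)
      simpa [hy'] using this
    let L : Fin n → ((Fin n × Fin k → ℂ) →ₗ[ℂ] EuclideanSpace ℂ (Fin k)) := fun a =>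
      { toFun := fun v => WithLp.toLp 2 (fun s => v (a, s) : Fin k → ℂ)
        map_add' := fun _ _ => rfl
        map_smul' := fun _ _ => rfl }
    let T : Submodule ℂ (Fin n × Fin k → ℂ) := ⨅ a : Fin n, Submodule.comap (L a) (S i)
    have hcT : ∀ t, c t ∈ T := by
      intro t
      rw [Submodule.mem_iInf]
      intro a
      exact Submodule.subset_span ⟨(a, t), rfl⟩
    let Φ : T →ₗ[ℂ] (Fin n → S i) := LinearMap.pi fun a =>
      ((L a).comp T.subtype).codRestrict (S i) (fun x => (Submodule.mem_iInf _).mp x.2 a)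
    have hΦ : Function.Injective Φ := by
      intro x y hxy
      apply Subtype.ext
      funext p
      have h1 := congrFun hxy p.1
      have h2 := congrArg Subtype.val h1
      have h3 := congrFun (congrArg WithLp.ofLp h2) p.2
      exact h3
    have h1 : LinearIndependent ℂ (fun t => (⟨c t, hcT t⟩ : T)) :=
      LinearIndependent.of_comp T.subtype (by exact hli)
    have h2 : k ≤ Module.finrank ℂ T := by
      simpa using h1.fintype_card_le_finrank
    have h3 : Module.finrank ℂ T ≤ Module.finrank ℂ (Fin n → S i) :=
      LinearMap.finrank_le_finrank_of_injective hΦ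
    have h4 : Module.finrank ℂ (Fin n → (S i : Submodule ℂ (EuclideanSpace ℂ (Fin k))))
        = n * Module.finrank ℂ (S i) := by
      rw [Module.finrank_pi_fintype]
      simp [Finset.sum_const]
    omega
  have hsup : ∀ s : Finset (Fin n),
      Module.finrank ℂ ((s.sup S : Submodule ℂ (EuclideanSpace ℂ (Fin k))))
        = ∑ i ∈ s, Module.finrank ℂ (S i) := by
    intro s
    induction s using Finset.cons_induction with
    | empty => simp
    | cons a s ha ih =>
      rw [Finset.sup_cons, Finset.sum_cons, ← ih]
      have hle : s.sup S ≤ (S a)ᗮ := by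
        refine Finset.sup_le fun j hj => ?_
        exact (hOrtho j a (fun hja => ha (hja ▸ hj))).le
      have hd : S a ⊓ s.sup S = ⊥ :=
        le_bot_iff.mp ((inf_le_inf_left (S a) hle).trans
          (Submodule.orthogonal_disjoint (S a)).le_bot)
      have hq := Submodule.finrank_sup_add_finrank_inf_eq (S a) (s.sup S)
      rw [hd] at hq
      simp only [finrank_bot] at hq
      omega
  have hsum : ∑ i : Fin n, Module.finrank ℂ (S i) ≤ k := by
    have h5 := hsup Finset.univ
    have hle := Submodule.finrank_le (Finset.univ.sup S)
    rw [h5] at hle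
    simpa [finrank_euclideanSpace] using hle
  set d : Fin n → ℕ := fun i => Module.finrank ℂ (S i) with hd'
  let i0 : Fin n := ⟨0, hn⟩
  have heq : k = n * d i0 := by
    by_contra hne
    have hlt : k < n * d i0 := lt_of_le_of_ne (hfin i0) hne
    have h5 : ∑ _i : Fin n, k < ∑ i : Fin n, n * d i :=
      Finset.sum_lt_sum (fun i _ => hfin i) ⟨i0, Finset.mem_univ _, hlt⟩
    rw [Finset.sum_const, Finset.card_univ, Fintype.card_fin, smul_eq_mul,
      ← Finset.mul_sum] at h5
    have h6 : n * ∑ i, d i ≤ n * k := Nat.mul_le_mul_left n hsum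
    omega
  refine ⟨d i0, ?_, by rw [heq, Nat.mul_comm]⟩
  rcases Nat.eq_zero_or_pos (d i0) with h0 | h0
  · rw [h0, Nat.mul_zero] at heq; omega
  · exact h0

/-- if `k` is not a positive multiple of `n`, no bipartite unitary yields
constant channels for all ancilla states. -/
theorem stmt4 (n k : ℕ) (hn : 0 < n) (hk : 0 < k)
    (h : ∀ r : ℕ, 0 < r → k ≠ r * n) :
    ¬ ∃ U : Matrix (Fin n × Fin k) (Fin n × Fin k) ℂ, IsUnitary U ∧
        ∀ β : Matrix (Fin k) (Fin k) ℂ, IsDensity β →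
          ∀ ρ σ : Matrix (Fin n) (Fin n) ℂ, IsDensity ρ → IsDensity σ →
            channel U β ρ = channel U β σ := by
  rintro ⟨U, hUni, hconst⟩
  have key : ∀ i j : Fin n, i ≠ j → ∀ t t' : Fin k, ∀ a b : Fin n,
      ∑ s : Fin k, U (a,s) (i,t) * star (U (b,s) (j,t')) = 0 := by
    intro i j hij t t' a b
    have h0 := channel_std_zero U hconst i j hij t t'
    have h1 := channel_std U i j t t' a b
    rw [h0] at h1
    simpa using h1.symm
  obtain ⟨r, hr, hkr⟩ := dim_argument hn hk U hUni.2 key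
  exact h r hr hkr

end BipartiteUnitary
end
end

section
/- A unitary operator U on ℂ^n ⊗ ℂ^k satisfies L_{U,β}(I_n) = I_n for every density matrix β ∈ M_k^{1,+}(ℂ) if and only if its partial transpose U^Γ = (id ⊗ t)(U) is also a unitary matrix. Equivalently, U_unital = U_{nk} ∩ (U_{nk})^Γ. -/
open Matrix Kronecker ComplexOrder

noncomputable section

namespace BipartiteUnitary

private lemma sum3_rev {M : Type*} [AddCommMonoid M] {α β γ : Type*}
    [Fintype α] [Fintype β] [Fintype γ] (f : α → β → γ → M) :
    ∑ a, ∑ b, ∑ c, f a b c = ∑ c, ∑ b, ∑ a, f a b c := by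
  calc ∑ a, ∑ b, ∑ c, f a b c = ∑ a, ∑ c, ∑ b, f a b c :=
        Finset.sum_congr rfl fun a _ => Finset.sum_comm
    _ = ∑ c, ∑ a, ∑ b, f a b c := Finset.sum_comm
    _ = ∑ c, ∑ b, ∑ a, f a b c := Finset.sum_congr rfl fun c _ => Finset.sum_comm

private lemma sum4_rev {M : Type*} [AddCommMonoid M] {α β γ δ : Type*}
    [Fintype α] [Fintype β] [Fintype γ] [Fintype δ] (f : α → β → γ → δ → M) :
    ∑ a, ∑ b, ∑ c, ∑ d, f a b c d = ∑ d, ∑ c, ∑ b, ∑ a, f a b c d := by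
  calc ∑ a, ∑ b, ∑ c, ∑ d, f a b c d = ∑ a, ∑ d, ∑ c, ∑ b, f a b c d :=
        Finset.sum_congr rfl fun a _ => sum3_rev _
    _ = ∑ d, ∑ a, ∑ c, ∑ b, f a b c d := Finset.sum_comm
    _ = ∑ d, ∑ b, ∑ c, ∑ a, f a b c d :=
        Finset.sum_congr rfl fun d _ => sum3_rev _
    _ = ∑ d, ∑ c, ∑ b, ∑ a, f a b c d :=
        Finset.sum_congr rfl fun d _ => Finset.sum_comm

private lemma channel_one_entry {n k : ℕ} (U : Matrix (Fin n × Fin k) (Fin n × Fin k) ℂ)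
    (β : Matrix (Fin k) (Fin k) ℂ) (i j : Fin n) :
    channel U β 1 i j
      = ∑ t, ∑ u, β t u * ((pt U * (pt U)ᴴ) (i, t) (j, u)) := by
  unfold channel trB
  simp only [Matrix.mul_apply, Matrix.conjTranspose_apply]
  unfold pt
  simp only [Matrix.mul_apply, Matrix.conjTranspose_apply, kroneckerMap_apply,
    Matrix.one_apply, Fintype.sum_prod_type, Finset.sum_mul, Finset.mul_sum,
    ite_mul, one_mul, zero_mul, mul_ite, mul_one, mul_zero,
    Finset.sum_ite_irrel, Finset.sum_const_zero, Finset.sum_ite_eq,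
    Finset.mem_univ, if_true, star_mul', Finset.sum_ite_eq']
  refine (sum4_rev (fun s a u t => U (i,s) (a,t) * β t u * star (U (j,s) (a,u)))).trans ?_
  refine Finset.sum_congr rfl fun t _ => ?_
  refine Finset.sum_congr rfl fun u _ => ?_
  refine Finset.sum_congr rfl fun a _ => ?_
  refine Finset.sum_congr rfl fun s _ => ?_
  ring

private lemma density_outer {k : Type*} [Fintype k] [DecidableEq k] (v : k → ℂ)
    (hv : ∑ s, star (v s) * v s = 1) :
    IsDensity (Matrix.of fun a b => v a * star (v b)) := by
  refine ⟨Matrix.posSemidef_iff_dotProduct_mulVec.mpr ⟨?_, ?_⟩, ?_⟩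
  · ext a b
    simp [Matrix.conjTranspose_apply, mul_comm]
  · intro x
    have key : star x ⬝ᵥ ((Matrix.of fun a b => v a * star (v b)) *ᵥ x)
        = star (∑ s, star (v s) * x s) * (∑ s, star (v s) * x s) := by
      simp only [dotProduct, Matrix.mulVec, Matrix.of_apply, star_sum, star_mul',
        star_star, Pi.star_apply]
      rw [Finset.sum_mul_sum]
      simp only [Finset.mul_sum]
      refine Finset.sum_congr rfl fun a _ => Finset.sum_congr rfl fun b _ => ?_
      ring
    rw [key]
    exact star_mul_self_nonneg _
  · simpa [Matrix.trace, Matrix.diag, mul_comm] using hv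

private lemma sum_pair {k : Type*} [Fintype k] [DecidableEq k] {t u : k} (h : t ≠ u)
    (A B : ℂ) (f : k → ℂ) :
    ∑ s, (if s = t then A else if s = u then B else 0) * f s = A * f t + B * f u := by
  have e : ∀ s, (if s = t then A else if s = u then B else 0) * f s
      = (if s = t then A * f s else 0) + (if s = u then B * f s else 0) := by
    intro s
    by_cases h1 : s = t <;> by_cases h2 : s = u <;> simp_all
  simp only [e, Finset.sum_add_distrib, Finset.sum_ite_eq', Finset.mem_univ, if_true]

/-- a bipartite unitary yields unital channels for all ancilla states
iff its partial transpose is unitary. -/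
theorem stmt6 (n k : ℕ) (hn : 0 < n) (hk : 0 < k)
    (U : Matrix (Fin n × Fin k) (Fin n × Fin k) ℂ) (hU : IsUnitary U) :
    (∀ β : Matrix (Fin k) (Fin k) ℂ, IsDensity β → channel U β 1 = 1)
    ↔ IsUnitary (pt U) := by
  constructor
  · intro h
    have diag : ∀ (t : Fin k) (i j : Fin n),
        (pt U * (pt U)ᴴ) (i, t) (j, t) = (1 : Matrix (Fin n) (Fin n) ℂ) i j := by
      intro t i j
      have hd := density_outer (fun s => if s = t then (1:ℂ) else 0)
        (by simp [apply_ite (star : ℂ → ℂ)])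
      have e := congrFun (congrFun (h _ hd) i) j
      rw [channel_one_entry] at e
      simpa [apply_ite (star : ℂ → ℂ), ite_mul, mul_ite] using e
    have offdiag : ∀ (t u : Fin k), t ≠ u → ∀ (i j : Fin n),
        (pt U * (pt U)ᴴ) (i, t) (j, u) = 0 := by
      intro t u htu i j
      set P := pt U * (pt U)ᴴ with hP
      set d := (1 : Matrix (Fin n) (Fin n) ℂ) i j with hd
      have key : ∀ c1 c2 : ℂ, star c1 * c1 + star c2 * c2 = 1 →
          c1 * (star c1 * P (i,t) (j,t) + star c2 * P (i,t) (j,u))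
            + c2 * (star c1 * P (i,u) (j,t) + star c2 * P (i,u) (j,u)) = d := by
        intro c1 c2 hnorm
        set v : Fin k → ℂ := fun s => if s = t then c1 else if s = u then c2 else 0 with hv
        have hvt : v t = c1 := by simp [hv]
        have hvu : v u = c2 := by simp [hv, htu, Ne.symm htu]
        have hsv : ∀ s, star (v s) = if s = t then star c1 else if s = u then star c2 else 0 := by
          intro s; simp [hv, apply_ite (star : ℂ → ℂ)]
        have hnorm' : ∑ s, star (v s) * v s = 1 := by
          simp only [hsv]
          rw [sum_pair htu, hvt, hvu]
          exact hnorm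
        have e := congrFun (congrFun (h _ (density_outer v hnorm')) i) j
        rw [channel_one_entry] at e
        simp only [Matrix.of_apply] at e
        have inner : ∀ t', ∑ u', v t' * star (v u') * P (i,t') (j,u')
            = v t' * (star c1 * P (i,t') (j,t) + star c2 * P (i,t') (j,u)) := by
          intro t'
          calc ∑ u', v t' * star (v u') * P (i,t') (j,u')
              = ∑ u', v t' * (star (v u') * P (i,t') (j,u')) :=
                Finset.sum_congr rfl fun u' _ => mul_assoc _ _ _
            _ = v t' * ∑ u', star (v u') * P (i,t') (j,u') := (Finset.mul_sum _ _ _).symm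
            _ = _ := by
                congr 1
                simp only [hsv]
                rw [sum_pair htu]
        rw [show (∑ t', ∑ u', v t' * star (v u') * P (i,t') (j,u'))
            = ∑ t', v t' * (star c1 * P (i,t') (j,t) + star c2 * P (i,t') (j,u)) from
          Finset.sum_congr rfl fun t' _ => inner t'] at e
        simp only [hv] at e
        rw [sum_pair htu] at e
        exact e
      set r : ℂ := ((Real.sqrt 2 : ℝ) : ℂ)⁻¹ with hrdef
      have h2 : ((Real.sqrt 2 : ℝ) : ℂ) * ((Real.sqrt 2 : ℝ) : ℂ) = 2 := by
        norm_cast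
        rw [Real.mul_self_sqrt] <;> norm_num
      have hrr : r * r = 2⁻¹ := by rw [hrdef, ← mul_inv, h2]
      have hrs : star r = r := by
        simp [hrdef, Complex.star_def, Complex.conj_ofReal]
      have hsI : star Complex.I = -Complex.I := by
        simp [Complex.star_def, Complex.conj_I]
      have e1 := key r r (by rw [hrs, hrr]; norm_num)
      have e2 := key r (r * Complex.I) (by
        simp only [star_mul', hrs, hsI]
        linear_combination (2:ℂ)*hrr - (r*r)*Complex.I_mul_I)
      simp only [star_mul', hrs, hsI] at e1 e2
      rw [diag t i j, diag u i j] at e1 e2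
      set A := P (i,t) (j,u) with hA
      set B := P (i,u) (j,t) with hB
      have f1 : A + B = 0 := by
        linear_combination 2*e1 - (4*d + 2*A + 2*B)*hrr
      have f2 : -Complex.I*A + Complex.I*B = 0 := by
        linear_combination 2*e2 - (2*d - 2*Complex.I*A + 2*Complex.I*B
          - 2*Complex.I*Complex.I*d)*hrr + d*Complex.I_mul_I
      linear_combination f1/2 + Complex.I/2 * f2 + ((A - B)/2) * Complex.I_mul_I
    have hP1 : pt U * (pt U)ᴴ = 1 := by
      ext ⟨i, t⟩ ⟨j, u⟩
      by_cases htu : t = u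
      · subst htu
        rw [diag t i j]
        simp [Matrix.one_apply, Prod.ext_iff]
      · rw [offdiag t u htu i j]
        simp [Matrix.one_apply, Prod.ext_iff, htu]
    exact ⟨hP1, mul_eq_one_comm.mp hP1⟩
  · intro hpt β hβ
    ext i j
    rw [channel_one_entry, hpt.1]
    by_cases hij : i = j
    · subst hij
      simp only [Matrix.one_apply, Prod.mk.injEq, true_and, mul_ite, mul_one, mul_zero]
      simp only [Finset.sum_ite_eq', Finset.mem_univ, if_true]
      simpa [Matrix.trace, Matrix.diag] using hβ.2
    · simp [Matrix.one_apply, Prod.ext_iff, hij]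

end BipartiteUnitary
end
end

section
/- Let U be a unitary operator on ℂ^n ⊗ ℂ^k such that for every density matrix β ∈ M_k^{1,+}(ℂ) the channel L_{U,β} is mixed unitary, i.e. L_{U,β}(X) = Σ_{i=1}^r p_i U_i X U_i* for some probabilities p_i ≥ 0 with Σ p_i = 1 and unitaries U_i on ℂ^n (both possibly depending on β). Then for every unit vector f ∈ ℂ^k and every orthonormal basis {e_i}_{i=1}^k of ℂ^k, the linear span of the n×n matrices E_i := (I_n ⊗ e_i*) U (I_n ⊗ f), i = 1, …, k, contains a unitary matrix. -/
open Matrix Kronecker ComplexOrder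

noncomputable section

namespace BipartiteUnitary

/-- The matrix `E = (I_n ⊗ e*) U (I_n ⊗ f) ∈ M_n(ℂ)`. -/
def Emat {n k : ℕ} (U : Matrix (Fin n × Fin k) (Fin n × Fin k) ℂ)
    (e f : Fin k → ℂ) : Matrix (Fin n) (Fin n) ℂ :=
  fun a b => ∑ s, ∑ t, star (e s) * U (a, s) (b, t) * f t


lemma kraus_entry {n : ℕ} {K K' : Type*} [Fintype K] [Fintype K']
    (A : K → Matrix (Fin n) (Fin n) ℂ) (B : K' → Matrix (Fin n) (Fin n) ℂ)
    (h : ∀ X, ∑ i, A i * X * (A i)ᴴ = ∑ j, B j * X * (B j)ᴴ) :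
    ∀ a c b d, (∑ i, A i a c * star (A i b d)) = ∑ j, B j a c * star (B j b d) := by
  intro a c b d
  have h2 := congrFun (congrFun (h (Matrix.single c d 1)) a) b
  simpa [Matrix.sum_apply, Matrix.mul_apply, Matrix.conjTranspose_apply, Matrix.single,
    Finset.sum_ite_eq, Finset.mul_sum, Finset.sum_mul, ite_and, mul_ite, ite_mul,
    Finset.sum_ite_eq'] using h2

lemma quad {n : ℕ} {K : Type*} [Fintype K]
    (A : K → Matrix (Fin n) (Fin n) ℂ) (x : Fin n × Fin n → ℂ) :
    ∑ i, (∑ p : Fin n × Fin n, star (x p) * A i p.1 p.2) *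
        star (∑ p : Fin n × Fin n, star (x p) * A i p.1 p.2)
      = ∑ p : Fin n × Fin n, ∑ q : Fin n × Fin n,
          star (x p) * x q * (∑ i, A i p.1 p.2 * star (A i q.1 q.2)) := by
  rw [Finset.sum_comm]
  simp only [star_sum, star_mul', star_star, Finset.sum_mul, Finset.mul_sum]
  rw [Finset.sum_comm]
  refine Finset.sum_congr rfl fun p _ => ?_
  rw [Finset.sum_comm]
  refine Finset.sum_congr rfl fun q _ => ?_
  refine Finset.sum_congr rfl fun i _ => ?_
  ring

lemma span_mem {n : ℕ} {K K' : Type*} [Fintype K] [Fintype K']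
    (A : K → Matrix (Fin n) (Fin n) ℂ) (B : K' → Matrix (Fin n) (Fin n) ℂ)
    (h : ∀ X, ∑ i, A i * X * (A i)ᴴ = ∑ j, B j * X * (B j)ᴴ) (j : K') :
    ∃ c : K → ℂ, ∑ s, c s • A s = B j := by
  classical
  set v : K → EuclideanSpace ℂ (Fin n × Fin n) := fun s => WithLp.toLp 2 (fun p : Fin n × Fin n => A s p.1 p.2) with hv
  set w : EuclideanSpace ℂ (Fin n × Fin n) := WithLp.toLp 2 (fun p : Fin n × Fin n => B j p.1 p.2) with hw
  set W : Submodule ℂ (EuclideanSpace ℂ (Fin n × Fin n)) := Submodule.span ℂ (Set.range v)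
  have hmem : w ∈ W := by
    rw [← Submodule.orthogonal_orthogonal W]
    rw [Submodule.mem_orthogonal]
    intro x hx
    -- g_A s = 0 for all s
    have hgA : ∀ s, (∑ p : Fin n × Fin n, star (x p) * A s p.1 p.2) = 0 := by
      intro s
      have h1 : (inner ℂ (v s) x : ℂ) = 0 := hx (v s) (Submodule.subset_span ⟨s, rfl⟩)
      have h2 : (inner ℂ x (v s) : ℂ) = 0 := by
        rw [← inner_conj_symm, h1, map_zero]
      simpa [PiLp.inner_apply, RCLike.inner_apply, hv, mul_comm] using h2
    have hA0 : (∑ i, (∑ p : Fin n × Fin n, star (x p) * A i p.1 p.2) *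
        star (∑ p : Fin n × Fin n, star (x p) * A i p.1 p.2)) = 0 := by
      simp only [hgA, zero_mul, Finset.sum_const_zero]
    rw [quad A x] at hA0
    have hB0 : (∑ i, (∑ p : Fin n × Fin n, star (x p) * B i p.1 p.2) *
        star (∑ p : Fin n × Fin n, star (x p) * B i p.1 p.2)) = 0 := by
      rw [quad B x]
      rw [← hA0]
      refine Finset.sum_congr rfl fun p _ => Finset.sum_congr rfl fun q _ => ?_
      rw [kraus_entry A B h p.1 p.2 q.1 q.2]
    -- each term is normSq, nonneg
    have hcastC : ((∑ i : K', Complex.normSq (∑ p : Fin n × Fin n, star (x p) * B i p.1 p.2) : ℝ) : ℂ) = 0 := by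
      push_cast
      rw [← hB0]
      refine Finset.sum_congr rfl fun i _ => ?_
      rw [← Complex.mul_conj, starRingEnd_apply]
    have hcast : (∑ i : K', Complex.normSq (∑ p : Fin n × Fin n, star (x p) * B i p.1 p.2)) = 0 := by
      exact_mod_cast hcastC
    have hnorm : ∀ i : K', Complex.normSq (∑ p : Fin n × Fin n, star (x p) * B i p.1 p.2) = 0 := fun i =>
      Finset.sum_eq_zero_iff_of_nonneg (fun i _ => Complex.normSq_nonneg _) |>.mp hcast i (Finset.mem_univ i)
    have hgB : (∑ p : Fin n × Fin n, star (x p) * B j p.1 p.2) = 0 := by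
      have := hnorm j
      exact Complex.normSq_eq_zero.mp this
    simpa [PiLp.inner_apply, RCLike.inner_apply, hw, mul_comm] using hgB
  rw [Submodule.mem_span_range_iff_exists_fun] at hmem
  obtain ⟨c, hc⟩ := hmem
  refine ⟨c, ?_⟩
  funext a b
  have h2 : (∑ s : K, c s • v s) (a, b) = w (a, b) := congrArg (fun z => z (a, b)) hc
  have h3 : (∑ s : K, c s • v s) (a, b) = ∑ s : K, c s * A s a b := by
    induction (Finset.univ : Finset K) using Finset.induction_on with
    | empty => simp
    | insert _ _ hnot ih =>
        rw [Finset.sum_insert hnot, Finset.sum_insert hnot, PiLp.add_apply, PiLp.smul_apply, ih]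
        rfl
  rw [h3] at h2
  simp only [hw] at h2
  simp only [Matrix.sum_apply, Matrix.smul_apply, smul_eq_mul]
  exact h2
lemma channel_eq_F {n k : ℕ} (U : Matrix (Fin n × Fin k) (Fin n × Fin k) ℂ) (f : Fin k → ℂ)
    (X : Matrix (Fin n) (Fin n) ℂ) :
    channel U (vecMulVec f (star f)) X =
      ∑ s : Fin k, (Matrix.of fun a b => ∑ t, U (a,s) (b,t) * f t) * X *
        (Matrix.of fun a b => ∑ t, U (a,s) (b,t) * f t)ᴴ := by
  funext a b
  simp only [channel, trB, Matrix.sum_apply, Matrix.mul_apply, Matrix.conjTranspose_apply,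
    Matrix.kroneckerMap_apply, Matrix.vecMulVec_apply, Matrix.of_apply, Fintype.sum_prod_type,
    Finset.sum_mul, Finset.mul_sum, star_sum, star_mul', Pi.star_apply]
  refine Finset.sum_congr rfl fun s _ => Finset.sum_congr rfl fun d _ =>
    Finset.sum_congr rfl fun u _ => Finset.sum_congr rfl fun c _ =>
    Finset.sum_congr rfl fun t _ => by ring
lemma onb_col {k : ℕ} (e : Fin k → Fin k → ℂ) (he : ONB e) (s s' : Fin k) :
    ∑ i, star (e i s) * e i s' = if s = s' then 1 else 0 := by
  classical
  set M : Matrix (Fin k) (Fin k) ℂ := Matrix.of fun s i => e i s with hM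
  have h1 : Mᴴ * M = 1 := by
    funext i j
    simpa [Matrix.mul_apply, Matrix.conjTranspose_apply, Matrix.one_apply, hM] using he i j
  have h2 : M * Mᴴ = 1 := mul_eq_one_comm.mpr h1
  have h3 := congrFun (congrFun h2 s) s'
  simp only [Matrix.mul_apply, Matrix.conjTranspose_apply, Matrix.one_apply, hM,
    Matrix.of_apply] at h3
  calc ∑ i, star (e i s) * e i s'
      = star (∑ i, e i s * star (e i s')) := by
        rw [star_sum]; refine Finset.sum_congr rfl fun i _ => by simp [mul_comm]
    _ = _ := by rw [h3]; split <;> simp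

lemma Emat_decomp {n k : ℕ} (U : Matrix (Fin n × Fin k) (Fin n × Fin k) ℂ)
    (f g : Fin k → ℂ) :
    Emat U g f = ∑ s, star (g s) • (Matrix.of fun a b => ∑ t, U (a,s) (b,t) * f t) := by
  funext a b
  simp [Emat, Matrix.sum_apply, Finset.mul_sum, mul_assoc]

lemma kraus_E {n k : ℕ} (U : Matrix (Fin n × Fin k) (Fin n × Fin k) ℂ)
    (f : Fin k → ℂ) (e : Fin k → Fin k → ℂ) (he : ONB e)
    (X : Matrix (Fin n) (Fin n) ℂ) :
    ∑ i, Emat U (e i) f * X * (Emat U (e i) f)ᴴ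
      = ∑ s : Fin k, (Matrix.of fun a b => ∑ t, U (a,s) (b,t) * f t) * X *
        (Matrix.of fun a b => ∑ t, U (a,s) (b,t) * f t)ᴴ := by
  let F : Fin k → Matrix (Fin n) (Fin n) ℂ :=
    fun s => Matrix.of fun a b => ∑ t, U (a,s) (b,t) * f t
  show ∑ i, Emat U (e i) f * X * (Emat U (e i) f)ᴴ = ∑ s, F s * X * (F s)ᴴ
  calc ∑ i, Emat U (e i) f * X * (Emat U (e i) f)ᴴ
      = ∑ i, ∑ s, ∑ s', (star (e i s) * e i s') • (F s * X * (F s')ᴴ) := by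
        refine Finset.sum_congr rfl fun i _ => ?_
        rw [Emat_decomp U f (e i)]
        simp only [Matrix.conjTranspose_sum, Matrix.conjTranspose_smul, star_star,
          Finset.sum_mul, Finset.mul_sum, Matrix.smul_mul, Matrix.mul_smul, smul_smul]
        rw [Finset.sum_comm]
        exact Finset.sum_congr rfl fun s _ => Finset.sum_congr rfl fun s' _ => by
          rw [mul_comm]
    _ = ∑ s, ∑ s', (∑ i, star (e i s) * e i s') • (F s * X * (F s')ᴴ) := by
        rw [Finset.sum_comm]
        refine Finset.sum_congr rfl fun s _ => ?_
        rw [Finset.sum_comm]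
        refine Finset.sum_congr rfl fun s' _ => ?_
        rw [Finset.sum_smul]
    _ = ∑ s, F s * X * (F s)ᴴ := by
        refine Finset.sum_congr rfl fun s _ => ?_
        rw [Finset.sum_congr rfl fun s' _ => by rw [onb_col e he s s']]
        simp [Finset.sum_ite_eq]
lemma density_f {k : ℕ} (f : Fin k → ℂ) (hf : (∑ s, star (f s) * f s) = 1) :
    IsDensity (vecMulVec f (star f)) := by
  constructor
  · rw [Matrix.vecMulVec_eq Unit, ← Matrix.conjTranspose_replicateCol]
    exact Matrix.posSemidef_self_mul_conjTranspose _
  · rw [Matrix.trace]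
    simp only [Matrix.diag_apply, Matrix.vecMulVec_apply, Pi.star_apply]
    rw [← hf]
    exact Finset.sum_congr rfl fun s _ => mul_comm _ _
/-- if a bipartite unitary yields mixed unitary channels for all ancilla
states, then for every unit vector `f` and orthonormal basis `{e_i}` of `ℂ^k`, the span
of the matrices `E_i = (I_n ⊗ e_i*) U (I_n ⊗ f)` contains a unitary matrix. -/
theorem stmt9 (n k : ℕ)
    (U : Matrix (Fin n × Fin k) (Fin n × Fin k) ℂ) (hU : IsUnitary U)
    (hmix : ∀ β : Matrix (Fin k) (Fin k) ℂ, IsDensity β →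
      ∃ (r : ℕ) (p : Fin r → ℝ) (Us : Fin r → Matrix (Fin n) (Fin n) ℂ),
        (∀ i, 0 ≤ p i) ∧ (∑ i, p i) = 1 ∧ (∀ i, IsUnitary (Us i)) ∧
        ∀ X : Matrix (Fin n) (Fin n) ℂ,
          channel U β X = ∑ i, (p i : ℂ) • (Us i * X * (Us i)ᴴ))
    (f : Fin k → ℂ) (hf : (∑ s, star (f s) * f s) = 1)
    (e : Fin k → Fin k → ℂ) (he : ONB e) :
    ∃ c : Fin k → ℂ, IsUnitary (∑ i, c i • Emat U (e i) f) := by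
  obtain ⟨r, p, Us, hp0, hp1, hUs, hch⟩ := hmix (vecMulVec f (star f)) (density_f f hf)
  set B : Fin r → Matrix (Fin n) (Fin n) ℂ := fun j => ((Real.sqrt (p j) : ℝ) : ℂ) • Us j with hB
  have hkraus : ∀ X, ∑ i, Emat U (e i) f * X * (Emat U (e i) f)ᴴ = ∑ j, B j * X * (B j)ᴴ := by
    intro X
    rw [kraus_E U f e he X, ← channel_eq_F U f X, hch X]
    refine Finset.sum_congr rfl fun j _ => ?_
    rw [hB]
    simp only [Matrix.conjTranspose_smul, Matrix.smul_mul, Matrix.mul_smul, smul_smul]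
    congr 1
    rw [RCLike.star_def, Complex.conj_ofReal, ← Complex.ofReal_mul,
      Real.mul_self_sqrt (hp0 j)]
  have hex : ∃ j, p j ≠ 0 := by
    by_contra h
    push_neg at h
    rw [Finset.sum_congr rfl fun i _ => h i] at hp1
    simp at hp1
  obtain ⟨j0, hj0⟩ := hex
  obtain ⟨c, hc⟩ := span_mem _ B hkraus j0
  have hs0 : ((Real.sqrt (p j0) : ℝ) : ℂ) ≠ 0 := by
    rw [Complex.ofReal_ne_zero]
    exact Real.sqrt_ne_zero'.mpr (lt_of_le_of_ne (hp0 j0) (Ne.symm hj0))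
  refine ⟨fun s => ((Real.sqrt (p j0) : ℝ) : ℂ)⁻¹ * c s, ?_⟩
  have hsum : ∑ i, (((Real.sqrt (p j0) : ℝ) : ℂ)⁻¹ * c i) • Emat U (e i) f
      = ((Real.sqrt (p j0) : ℝ) : ℂ)⁻¹ • ∑ i, c i • Emat U (e i) f := by
    rw [Finset.smul_sum]
    exact Finset.sum_congr rfl fun i _ => mul_smul _ _ _
  rw [hsum, hc, hB, smul_smul, inv_mul_cancel₀ hs0, one_smul]
  exact hUs j0
end BipartiteUnitary
end
end

section
/- Let n = 2. Every unitary U on ℂ² ⊗ ℂ^k of the form U = e_1f_1* ⊗ U_1 + e_2f_2* ⊗ U_2, where U_1, U_2 are unitaries on ℂ^k and {e_1, e_2}, {f_1, f_2} are orthonormal bases of ℂ², belongs to U^A_block-diag, i.e. U = Σ_{i=1}^k V_i ⊗ g_ih_i* for some unitaries V_i on ℂ² and orthonormal bases {g_i}, {h_i} of ℂ^k. In other words, for n = 2, U^B_block-diag ⊆ U^A_block-diag. -/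
open Matrix Kronecker ComplexOrder

noncomputable section

namespace BipartiteUnitary

section Aux

/-- Completeness: a square orthonormal family sums to the identity. -/
lemma onb_sum_outer {k : Type*} [Fintype k] [DecidableEq k] {g : k → k → ℂ}
    (hg : ONB g) : ∑ i, vecMulVec (g i) (star (g i)) = 1 := by
  set G : Matrix k k ℂ := Matrix.of fun s i => g i s with hG
  have h1 : Gᴴ * G = 1 := by
    ext i j
    simpa [Matrix.mul_apply, Matrix.conjTranspose_apply, hG, Matrix.one_apply] using hg i j
  have h2 : G * Gᴴ = 1 := mul_eq_one_comm.mp h1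
  ext s t
  rw [← Matrix.ext_iff] at h2
  have h3 := h2 s t
  simp only [Matrix.mul_apply, Matrix.conjTranspose_apply, hG, Matrix.of_apply] at h3
  simpa [Matrix.sum_apply, Matrix.vecMulVec_apply] using h3

lemma mul_vecMulVec {m k l : Type*} [Fintype k] (U : Matrix m k ℂ) (x : k → ℂ) (y : l → ℂ) :
    U * vecMulVec x y = vecMulVec (U *ᵥ x) y := by
  ext s t
  simp only [Matrix.mul_apply, Matrix.vecMulVec_apply, Matrix.mulVec, dotProduct,
    Finset.sum_mul]
  exact Finset.sum_congr rfl fun j _ => by ring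

lemma outer_mul_outer {l k m : Type*} [Fintype k] (a : l → ℂ) (b u : k → ℂ) (v : m → ℂ) :
    vecMulVec a (star b) * vecMulVec u (star v) = (∑ j, star (b j) * u j) • vecMulVec a (star v) := by
  ext s t
  simp only [Matrix.mul_apply, Matrix.vecMulVec_apply, Matrix.smul_apply, smul_eq_mul,
    Finset.sum_mul, Pi.star_apply]
  exact Finset.sum_congr rfl fun j _ => by ring

lemma outer_conjT {l m : Type*} (a : l → ℂ) (b : m → ℂ) :
    (vecMulVec a (star b))ᴴ = vecMulVec b (star a) := by
  ext i j
  simp [Matrix.conjTranspose_apply, Matrix.vecMulVec_apply, mul_comm]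

lemma kron_sum_right {k : ℕ} {l m : Type*} [Fintype l] [DecidableEq l]
    (M : Matrix l l ℂ) (N : Fin k → Matrix m m ℂ) :
    ∑ i, M ⊗ₖ N i = M ⊗ₖ ∑ i, N i := by
  ext ⟨a, s⟩ ⟨b, t⟩
  simp [Matrix.sum_apply, Finset.mul_sum]

/-- Spectral decomposition of a unitary matrix. -/
lemma unitary_diag {k : ℕ} (W : Matrix (Fin k) (Fin k) ℂ) (hW : IsUnitary W) :
    ∃ (g : Fin k → Fin k → ℂ) (lam : Fin k → ℂ), ONB g ∧ (∀ i, star (lam i) * lam i = 1) ∧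
      W = ∑ i, lam i • vecMulVec (g i) (star (g i)) := by
  classical
  -- choose a unimodular scalar outside the spectrum of `W`
  obtain ⟨c, hc1, hcA⟩ : ∃ c : ℂ, star c * c = 1 ∧
      IsUnit (c • (1 : Matrix (Fin k) (Fin k) ℂ) - W) := by
    have hinj : Set.InjOn (fun t : ℝ => Complex.exp (t * Complex.I)) (Set.Icc 0 Real.pi) := by
      intro s hs t ht hst
      have : Real.cos s = Real.cos t := by
        have h := congrArg Complex.re hst
        simpa [Complex.exp_ofReal_mul_I_re] using h
      exact Real.injOn_cos hs ht this
    have himg : ((fun t : ℝ => Complex.exp (t * Complex.I)) '' Set.Icc 0 Real.pi).Infinite :=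
      (Set.Icc_infinite Real.pi_pos).image hinj
    obtain ⟨c, hcmem, hcnot⟩ := (himg.diff W.finite_spectrum).nonempty
    obtain ⟨t, _, rfl⟩ := hcmem
    refine ⟨Complex.exp (↑t * Complex.I), ?_, ?_⟩
    · have hstar : star (Complex.exp (↑t * Complex.I)) = Complex.exp (-(↑t * Complex.I)) := by
        rw [Complex.star_def, ← Complex.exp_conj]
        congr 1
        simp [Complex.conj_I]
      rw [hstar, ← Complex.exp_add, neg_add_cancel, Complex.exp_zero]
    · have := spectrum.notMem_iff.mp hcnot
      rwa [Algebra.algebraMap_eq_smul_one] at this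
  set A : Matrix (Fin k) (Fin k) ℂ := c • 1 - W with hAdef
  set B : Matrix (Fin k) (Fin k) ℂ := c • 1 + W with hBdef
  have hAdet : IsUnit A.det := (Matrix.isUnit_iff_isUnit_det A).mp hcA
  have hAAinv : A * A⁻¹ = 1 := Matrix.mul_nonsing_inv A hAdet
  have hAinvA : A⁻¹ * A = 1 := Matrix.nonsing_inv_mul A hAdet
  have h1c : Commute (c • (1 : Matrix (Fin k) (Fin k) ℂ)) W := by
    simp [Commute, SemiconjBy, Matrix.smul_mul, Matrix.mul_smul]
  have hABcomm : Commute A B :=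
    ((Commute.refl (c • 1)).add_right h1c).sub_left ((h1c.symm).add_right (Commute.refl W))
  have hAinvB : A⁻¹ * B = B * A⁻¹ := by
    calc A⁻¹ * B = A⁻¹ * B * (A * A⁻¹) := by rw [hAAinv, mul_one]
      _ = A⁻¹ * (B * A) * A⁻¹ := by simp only [mul_assoc]
      _ = A⁻¹ * (A * B) * A⁻¹ := by rw [← hABcomm.eq]
      _ = (A⁻¹ * A) * (B * A⁻¹) := by simp only [mul_assoc]
      _ = B * A⁻¹ := by rw [hAinvA, one_mul]
  set H : Matrix (Fin k) (Fin k) ℂ := Complex.I • (A⁻¹ * B) with hHdef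
  have hAH : A * H = Complex.I • B := by
    rw [hHdef, Matrix.mul_smul, ← mul_assoc, hAAinv, one_mul]
  have hHA : H * A = Complex.I • B := by
    rw [hHdef, Matrix.smul_mul, hAinvB, mul_assoc, hAinvA, mul_one]
  have hcne : star c ≠ 0 := fun h => by simp [h] at hc1
  have hWA : W * Aᴴ = (-(star c)) • A := by
    have hAstar : Aᴴ = star c • (1 : Matrix (Fin k) (Fin k) ℂ) - Wᴴ := by
      simp [hAdef]
    rw [hAstar, mul_sub, Matrix.mul_smul, mul_one, hW.1, hAdef, smul_sub, smul_smul,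
      neg_mul, hc1]
    simp [neg_smul, sub_eq_add_neg]
    abel
  have hWB : W * Bᴴ = (star c) • B := by
    have hBstar : Bᴴ = star c • (1 : Matrix (Fin k) (Fin k) ℂ) + Wᴴ := by
      simp [hBdef]
    rw [hBstar, mul_add, Matrix.mul_smul, mul_one, hW.1, hBdef, smul_add, smul_smul, hc1]
    simp [add_comm]
  have hconj : Aᴴ * Hᴴ = (-Complex.I) • Bᴴ := by
    have h := congrArg Matrix.conjTranspose hHA
    simpa [Matrix.conjTranspose_mul, Matrix.conjTranspose_smul, Complex.star_def,
      Complex.conj_I, neg_smul] using h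
  have h5 : A * Hᴴ = Complex.I • B := by
    have h6 : W * (Aᴴ * Hᴴ) = W * ((-Complex.I) • Bᴴ) := by rw [hconj]
    rw [← mul_assoc, hWA, Matrix.mul_smul, hWB, Matrix.smul_mul] at h6
    have h7 : (-(star c)) • (A * Hᴴ) = (-(star c)) • (Complex.I • B) := by
      rw [h6, smul_smul, smul_smul]
      ring_nf
    exact smul_right_injective _ (neg_ne_zero.mpr hcne) h7
  have hH : H.IsHermitian := by
    show Hᴴ = H
    have hAeq : A * Hᴴ = A * H := h5.trans hAH.symm
    calc Hᴴ = (A⁻¹ * A) * Hᴴ := by rw [hAinvA, one_mul]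
      _ = A⁻¹ * (A * Hᴴ) := by rw [mul_assoc]
      _ = A⁻¹ * (A * H) := by rw [hAeq]
      _ = (A⁻¹ * A) * H := by rw [mul_assoc]
      _ = H := by rw [hAinvA, one_mul]
  set V : Matrix (Fin k) (Fin k) ℂ := (hH.eigenvectorUnitary : Matrix (Fin k) (Fin k) ℂ)
    with hVdef
  set d : Fin k → ℝ := hH.eigenvalues with hddef
  have hspec : H = V * Matrix.diagonal (fun j => (d j : ℂ)) * Vᴴ := by
    have h := hH.spectral_theorem
    rw [Unitary.conjStarAlgAut_apply, Matrix.star_eq_conjTranspose] at h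
    exact h
  have hVsV : Vᴴ * V = 1 := by
    have := Matrix.mem_unitaryGroup_iff'.mp hH.eigenvectorUnitary.2
    rwa [Matrix.star_eq_conjTranspose] at this
  have hVVs : V * Vᴴ = 1 := by
    have := Matrix.mem_unitaryGroup_iff.mp hH.eigenvectorUnitary.2
    rwa [Matrix.star_eq_conjTranspose] at this
  have hne : ∀ j, ((d j : ℂ) + Complex.I) ≠ 0 := by
    intro j h
    have := congrArg Complex.im h
    simp at this
  have hne' : ∀ j, ((d j : ℂ) - Complex.I) ≠ 0 := by
    intro j h
    have := congrArg Complex.im h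
    simp at this
  set lam : Fin k → ℂ := fun j => c * ((d j : ℂ) - Complex.I) * ((d j : ℂ) + Complex.I)⁻¹
    with hlamdef
  have hlamu : ∀ j, star (lam j) * lam j = 1 := by
    intro j
    have h2 : ((d j : ℂ) + Complex.I) * ((d j : ℂ) + Complex.I)⁻¹ = 1 :=
      mul_inv_cancel₀ (hne j)
    have h3 : ((d j : ℂ) - Complex.I) * ((d j : ℂ) - Complex.I)⁻¹ = 1 :=
      mul_inv_cancel₀ (hne' j)
    have hc1' : (starRingEnd ℂ) c * c = 1 := hc1
    rw [hlamdef]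
    simp only [Complex.star_def, _root_.map_mul, map_inv₀, map_sub, _root_.map_add,
      Complex.conj_ofReal, Complex.conj_I, sub_neg_eq_add]
    linear_combination (((d j : ℂ) + Complex.I) * ((d j : ℂ) + Complex.I)⁻¹ *
        ((d j : ℂ) - Complex.I) * ((d j : ℂ) - Complex.I)⁻¹) * hc1' +
      (((d j : ℂ) - Complex.I) * ((d j : ℂ) - Complex.I)⁻¹) * h2 + h3
  -- the diagonalized candidate satisfies the same linear equation as `W`
  have hM : H + Complex.I • (1 : Matrix (Fin k) (Fin k) ℂ)
      = V * Matrix.diagonal (fun j => (d j : ℂ) + Complex.I) * Vᴴ := by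
    have hdiag : Matrix.diagonal (fun j => (d j : ℂ) + Complex.I)
        = Matrix.diagonal (fun j => (d j : ℂ)) + Complex.I • 1 := by
      ext i j
      by_cases h : i = j <;> simp [Matrix.diagonal_apply, Matrix.one_apply, h]
    rw [hdiag, mul_add, add_mul, ← hspec]
    congr 1
    rw [Matrix.mul_smul, mul_one, Matrix.smul_mul, hVVs]
  have hM2 : c • H - Complex.I • (c • (1 : Matrix (Fin k) (Fin k) ℂ))
      = V * Matrix.diagonal (fun j => c * ((d j : ℂ) - Complex.I)) * Vᴴ := by
    have hdiag : Matrix.diagonal (fun j => c * ((d j : ℂ) - Complex.I))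
        = c • Matrix.diagonal (fun j => (d j : ℂ)) - Complex.I • (c • 1) := by
      ext i j
      by_cases h : i = j <;>
        simp [Matrix.diagonal_apply, Matrix.one_apply, h, mul_sub, mul_comm]
    rw [hdiag, mul_sub, sub_mul]
    congr 1
    · rw [hspec, Matrix.mul_smul, Matrix.smul_mul]
    · rw [Matrix.mul_smul, Matrix.mul_smul, mul_one, Matrix.smul_mul, Matrix.smul_mul, hVVs]
  have key : (H + Complex.I • 1) * W
      = c • H - Complex.I • (c • (1 : Matrix (Fin k) (Fin k) ℂ)) := by
    have h : c • H - H * W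
        = Complex.I • (c • (1 : Matrix (Fin k) (Fin k) ℂ)) + Complex.I • W := by
      have h0 : H * (c • (1 : Matrix (Fin k) (Fin k) ℂ) - W)
          = Complex.I • (c • (1 : Matrix (Fin k) (Fin k) ℂ) + W) := by
        rw [← hAdef, ← hBdef]; exact hHA
      rw [mul_sub, Matrix.mul_smul, mul_one, smul_add] at h0
      exact h0
    rw [sub_eq_iff_eq_add] at h
    rw [add_mul, Matrix.smul_mul Complex.I (1 : Matrix (Fin k) (Fin k) ℂ) W, one_mul, h]
    abel
  have key' : (H + Complex.I • 1) * (V * Matrix.diagonal lam * Vᴴ)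
      = c • H - Complex.I • (c • (1 : Matrix (Fin k) (Fin k) ℂ)) := by
    rw [hM, hM2]
    have hdd : Matrix.diagonal (fun j => (d j : ℂ) + Complex.I) * Matrix.diagonal lam
        = Matrix.diagonal (fun j => c * ((d j : ℂ) - Complex.I)) := by
      rw [Matrix.diagonal_mul_diagonal]
      refine congrArg Matrix.diagonal (funext fun j => ?_)
      have h2 : ((d j : ℂ) + Complex.I) * ((d j : ℂ) + Complex.I)⁻¹ = 1 :=
        mul_inv_cancel₀ (hne j)
      show ((d j : ℂ) + Complex.I) * (c * ((d j : ℂ) - Complex.I) * ((d j : ℂ) + Complex.I)⁻¹)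
          = c * ((d j : ℂ) - Complex.I)
      linear_combination (c * ((d j : ℂ) - Complex.I)) * h2
    calc V * Matrix.diagonal (fun j => (d j : ℂ) + Complex.I) * Vᴴ
          * (V * Matrix.diagonal lam * Vᴴ)
        = V * Matrix.diagonal (fun j => (d j : ℂ) + Complex.I) * (Vᴴ * V)
          * Matrix.diagonal lam * Vᴴ := by simp only [mul_assoc]
      _ = V * (Matrix.diagonal (fun j => (d j : ℂ) + Complex.I) * Matrix.diagonal lam) * Vᴴ := by
          rw [hVsV, mul_one]; simp only [mul_assoc]
      _ = V * Matrix.diagonal (fun j => c * ((d j : ℂ) - Complex.I)) * Vᴴ := by rw [hdd]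
  have hMunit : IsUnit (H + Complex.I • (1 : Matrix (Fin k) (Fin k) ℂ)) := by
    rw [Matrix.isUnit_iff_isUnit_det, hM, Matrix.det_mul, Matrix.det_mul, Matrix.det_diagonal]
    have hdet1 : V.det * Vᴴ.det = 1 := by
      rw [← Matrix.det_mul, hVVs, Matrix.det_one]
    have hVu : IsUnit V.det := IsUnit.of_mul_eq_one _ hdet1
    have hVu' : IsUnit Vᴴ.det := IsUnit.of_mul_eq_one _ (by rw [mul_comm]; exact hdet1)
    refine (hVu.mul ?_).mul hVu'
    exact isUnit_iff_ne_zero.mpr (Finset.prod_ne_zero_iff.mpr fun j _ => hne j)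
  have hWeq : W = V * Matrix.diagonal lam * Vᴴ := hMunit.mul_left_cancel (key.trans key'.symm)
  refine ⟨fun j s => V s j, lam, ?_, hlamu, ?_⟩
  · intro i j
    rw [← Matrix.ext_iff] at hVsV
    have := hVsV i j
    simpa [Matrix.mul_apply, Matrix.conjTranspose_apply, Matrix.one_apply] using this
  · rw [hWeq]
    ext s t
    rw [Matrix.mul_apply, Matrix.sum_apply]
    refine Finset.sum_congr rfl fun j _ => ?_
    simp only [Matrix.mul_diagonal, Matrix.conjTranspose_apply, Matrix.vecMulVec_apply,
      Matrix.smul_apply, Pi.star_apply, smul_eq_mul]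
    ring

end Aux

/-- for `n = 2`, every unitary of the form
`e_1f_1* ⊗ U_1 + e_2f_2* ⊗ U_2` belongs to `𝒰^A_{block-diag}`;
in other words `𝒰^B_{block-diag} ⊆ 𝒰^A_{block-diag}` when `n = 2`. -/
theorem stmt14 (k : ℕ)
    (U : Matrix (Fin 2 × Fin k) (Fin 2 × Fin k) ℂ) (hU : IsUnitary U)
    (U1 U2 : Matrix (Fin k) (Fin k) ℂ) (hU1 : IsUnitary U1) (hU2 : IsUnitary U2)
    (e f : Fin 2 → Fin 2 → ℂ) (he : ONB e) (hf : ONB f)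
    (hdecomp : U = vecMulVec (e 0) (star (f 0)) ⊗ₖ U1 +
        vecMulVec (e 1) (star (f 1)) ⊗ₖ U2) :
    memUA U := by
  -- the unitary `W = U1ᴴ * U2` measures the mismatch between the two blocks
  have hWuni : IsUnitary (U1ᴴ * U2) := by
    constructor
    · rw [Matrix.conjTranspose_mul, Matrix.conjTranspose_conjTranspose, mul_assoc,
        ← mul_assoc U2, hU2.1, one_mul, hU1.2]
    · rw [Matrix.conjTranspose_mul, Matrix.conjTranspose_conjTranspose, mul_assoc,
        ← mul_assoc U1, hU1.1, one_mul, hU2.2]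
  obtain ⟨g, lam, hg, hlamu, hWd⟩ := unitary_diag (U1ᴴ * U2) hWuni
  have hsum_e : vecMulVec (e 0) (star (e 0)) + vecMulVec (e 1) (star (e 1)) = 1 := by
    have h := onb_sum_outer he
    rwa [Fin.sum_univ_two] at h
  have hsum_f : vecMulVec (f 0) (star (f 0)) + vecMulVec (f 1) (star (f 1)) = 1 := by
    have h := onb_sum_outer hf
    rwa [Fin.sum_univ_two] at h
  have hsum_g : ∑ i, vecMulVec (g i) (star (g i)) = 1 := onb_sum_outer hg
  refine ⟨fun i => vecMulVec (e 0) (star (f 0)) + lam i • vecMulVec (e 1) (star (f 1)),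
    fun i => U1 *ᵥ g i, g, ?_, ?_, hg, ?_⟩
  · -- each `Us i` is unitary
    intro i
    have h01 : ((0 : Fin 2) = 1) = False := by simp
    have h10 : ((1 : Fin 2) = 0) = False := by simp
    constructor
    · rw [Matrix.conjTranspose_add, Matrix.conjTranspose_smul, outer_conjT, outer_conjT,
        add_mul, mul_add, mul_add, Matrix.smul_mul, Matrix.mul_smul, Matrix.mul_smul,
        Matrix.smul_mul, outer_mul_outer, outer_mul_outer, outer_mul_outer, outer_mul_outer,
        hf 0 0, hf 0 1, hf 1 0, hf 1 1]
      simp only [h01, h10, if_true, if_false, one_smul, zero_smul, smul_zero, add_zero,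
        zero_add, smul_smul, if_pos rfl]
      have hll : lam i * star (lam i) = 1 := by rw [mul_comm]; exact hlamu i
      simp only [hlamu i, hll, one_smul]
      exact hsum_e
    · rw [Matrix.conjTranspose_add, Matrix.conjTranspose_smul, outer_conjT, outer_conjT,
        add_mul, mul_add, mul_add, Matrix.smul_mul, Matrix.mul_smul, Matrix.mul_smul,
        Matrix.smul_mul, outer_mul_outer, outer_mul_outer, outer_mul_outer, outer_mul_outer,
        he 0 0, he 0 1, he 1 0, he 1 1]
      simp only [h01, h10, if_true, if_false, one_smul, zero_smul, smul_zero, add_zero,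
        zero_add, smul_smul, if_pos rfl]
      have hll : lam i * star (lam i) = 1 := by rw [mul_comm]; exact hlamu i
      simp only [hlamu i, hll, one_smul]
      exact hsum_f
  · -- `fun i => U1 *ᵥ g i` is an orthonormal family
    intro i j
    have : ∑ s, star ((U1 *ᵥ g i) s) * (U1 *ᵥ g j) s
        = star (U1 *ᵥ g i) ⬝ᵥ (U1 *ᵥ g j) := rfl
    rw [this, Matrix.star_mulVec, ← Matrix.dotProduct_mulVec, Matrix.mulVec_mulVec,
      hU1.2, Matrix.one_mulVec]
    exact hg i j
  · -- the decomposition itself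
    rw [hdecomp]
    have expand : ∀ i : Fin k,
        (vecMulVec (e 0) (star (f 0)) + lam i • vecMulVec (e 1) (star (f 1))) ⊗ₖ
          vecMulVec (U1 *ᵥ g i) (star (g i))
        = vecMulVec (e 0) (star (f 0)) ⊗ₖ (U1 * vecMulVec (g i) (star (g i)))
          + vecMulVec (e 1) (star (f 1)) ⊗ₖ (lam i • (U1 * vecMulVec (g i) (star (g i)))) := by
      intro i
      rw [Matrix.add_kronecker, Matrix.smul_kronecker, ← Matrix.kronecker_smul, ← mul_vecMulVec]
    rw [Finset.sum_congr rfl fun i _ => expand i, Finset.sum_add_distrib,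
      kron_sum_right, kron_sum_right, ← Finset.mul_sum, hsum_g, mul_one]
    congr 1
    have hsum2 : ∑ i, lam i • (U1 * vecMulVec (g i) (star (g i)))
        = U1 * ∑ i, lam i • vecMulVec (g i) (star (g i)) := by
      rw [Finset.mul_sum]
      exact Finset.sum_congr rfl fun i _ => (Matrix.mul_smul _ _ _).symm
    rw [hsum2, ← hWd, ← mul_assoc, hU1.1, one_mul]


end BipartiteUnitary
end
end

section
/- Let X ∈ M_{nk}(ℂ) be a circulant matrix: X_{ij} = x_{(j−i) mod nk} for some vector x ∈ ℂ^{nk}, with indices 0 ≤ i, j < nk. Under the identification of M_{nk}(ℂ) with M_n(ℂ) ⊗ M_k(ℂ) given by mapping the index pair (i, s) with 0 ≤ i < n, 0 ≤ s < k to i·k + s, the matrix X belongs to M^B_block-diag, i.e. X = Σ_{i=1}^n e_if_i* ⊗ X_i for some X_i ∈ M_k(ℂ) and orthonormal bases {e_i}, {f_i} of ℂ^n. In particular, every circulant unitary matrix of size nk belongs to U^B_block-diag. -/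
open Matrix Kronecker ComplexOrder

noncomputable section

namespace BipartiteUnitary

/-! ### Auxiliary lemmas for statement 15 -/

private lemma expsum_aux (n : ℕ) (hn : 0 < n) (a : ℤ) :
    ∑ m : Fin n, Complex.exp (2 * Real.pi * Complex.I * a * m / n) =
      if (n : ℤ) ∣ a then (n : ℂ) else 0 := by
  have hn' : (n : ℂ) ≠ 0 := Nat.cast_ne_zero.2 hn.ne'
  set z : ℂ := Complex.exp (2 * Real.pi * Complex.I * a / n) with hz
  have hterm : ∀ m : Fin n, Complex.exp (2 * Real.pi * Complex.I * a * m / n) = z ^ (m : ℕ) := by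
    intro m
    rw [hz, ← Complex.exp_nat_mul]
    ring_nf
  simp only [hterm]
  rw [Fin.sum_univ_eq_sum_range (fun i => z ^ i) n]
  by_cases hdvd : (n : ℤ) ∣ a
  · rw [if_pos hdvd]
    obtain ⟨b, hb⟩ := hdvd
    have hz1 : z = 1 := by
      rw [hz, hb]
      have : (2 * (Real.pi : ℂ) * Complex.I * ((n : ℤ) * b : ℤ) / n) =
          (b : ℤ) * (2 * Real.pi * Complex.I) := by
        push_cast
        field_simp
      rw [this, Complex.exp_int_mul_two_pi_mul_I]
    simp [hz1]
  · rw [if_neg hdvd]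
    have hzne : z ≠ 1 := by
      intro h
      rw [hz] at h
      rw [Complex.exp_eq_one_iff] at h
      obtain ⟨c, hc⟩ := h
      apply hdvd
      refine ⟨c, ?_⟩
      have hpi : (Real.pi : ℂ) ≠ 0 := Complex.ofReal_ne_zero.2 Real.pi_ne_zero
      have h2 : (2 * (Real.pi : ℂ) * Complex.I) ≠ 0 := by
        simp [hpi, Complex.I_ne_zero]
      have h3 : (2 * (Real.pi : ℂ) * Complex.I) * a =
          (2 * (Real.pi : ℂ) * Complex.I) * ((n : ℤ) * c : ℤ) := by
        push_cast
        field_simp at hc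
        linear_combination (2 * (Real.pi : ℂ) * Complex.I) * hc
      have : (a : ℂ) = ((n : ℤ) * c : ℤ) := mul_left_cancel₀ h2 h3
      exact_mod_cast this
    rw [geom_sum_eq hzne]
    have hzn : z ^ n = 1 := by
      rw [hz, ← Complex.exp_nat_mul]
      have : (n : ℂ) * (2 * Real.pi * Complex.I * a / n) = (a : ℤ) * (2 * Real.pi * Complex.I) := by
        field_simp
      rw [this, Complex.exp_int_mul_two_pi_mul_I]
    rw [hzn]
    simp

/-- The Fourier orthonormal basis of `ℂ^n`. -/
private noncomputable def ee (n : ℕ) (m i : Fin n) : ℂ :=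
  Complex.exp (2 * Real.pi * Complex.I * ((m : ℕ) * (i : ℕ) : ℕ) / n) / Real.sqrt n

private lemma star_ee (n : ℕ) (m i : Fin n) :
    star (ee n m i) =
      Complex.exp (-(2 * Real.pi * Complex.I * ((m : ℕ) * (i : ℕ) : ℕ) / n)) / Real.sqrt n := by
  show (starRingEnd ℂ) _ = _
  rw [ee, map_div₀, ← Complex.exp_conj]
  congr 1
  · congr 1
    simp only [map_div₀, _root_.map_mul, Complex.conj_I, Complex.conj_natCast,
      Complex.conj_ofReal, map_ofNat]
    ring
  · exact Complex.conj_ofReal _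

private lemma sqrt_mul_self_aux (n : ℕ) :
    ((Real.sqrt n : ℂ)) * (Real.sqrt n : ℂ) = (n : ℂ) := by
  rw [← Complex.ofReal_mul, Real.mul_self_sqrt (Nat.cast_nonneg n)]
  simp

private lemma onb_ee (n : ℕ) : ONB (ee n) := by
  intro m m'
  have hn : 0 < n := m.pos
  have hn' : (n : ℂ) ≠ 0 := Nat.cast_ne_zero.2 hn.ne'
  have hterm : ∀ s : Fin n, star (ee n m s) * ee n m' s
      = Complex.exp (2 * Real.pi * Complex.I *
          ((((m' : ℕ) : ℤ) - ((m : ℕ) : ℤ) : ℤ) : ℂ) * s / n) / n := by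
    intro s
    rw [star_ee, ee, div_mul_div_comm, sqrt_mul_self_aux, ← Complex.exp_add]
    congr 2
    push_cast
    ring
  simp only [hterm, ← Finset.sum_div]
  rw [expsum_aux n hn (((m' : ℕ) : ℤ) - ((m : ℕ) : ℤ))]
  by_cases h : m = m'
  · subst h
    simp [hn']
  · have : ¬ ((n : ℤ) ∣ (((m' : ℕ) : ℤ) - ((m : ℕ) : ℤ))) := by
      intro hd
      have hb : |(((m' : ℕ) : ℤ) - ((m : ℕ) : ℤ))| < n := by
        have h1 := m.isLt; have h2 := m'.isLt
        rw [abs_lt]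
        omega
      have := Int.eq_zero_of_abs_lt_dvd hd hb
      apply h
      have : (m : ℕ) = (m' : ℕ) := by omega
      exact Fin.ext this
    rw [if_neg this, if_neg h, zero_div]

private lemma ee_mul_star_ee (n : ℕ) (m i j : Fin n) :
    ee n m i * star (ee n m j) =
      Complex.exp (2 * Real.pi * Complex.I *
        ((((i : ℕ) : ℤ) - ((j : ℕ) : ℤ) : ℤ) : ℂ) * m / n) / n := by
  rw [star_ee, ee, div_mul_div_comm, sqrt_mul_self_aux, ← Complex.exp_add]
  congr 2
  push_cast
  ring

private lemma Pmul_aux {n : ℕ} {e : Fin n → Fin n → ℂ} (he : ONB e) (m l : Fin n) :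
    vecMulVec (e m) (star (e m)) * vecMulVec (e l) (star (e l)) =
      if m = l then vecMulVec (e m) (star (e m)) else 0 := by
  ext i j
  rw [Matrix.mul_apply]
  have : ∀ s, vecMulVec (e m) (star (e m)) i s * vecMulVec (e l) (star (e l)) s j
      = (e m i * star (e l j)) * (star (e m s) * e l s) := by
    intro s
    simp only [vecMulVec_apply, Pi.star_apply]
    ring
  simp only [this, ← Finset.mul_sum, he m l]
  by_cases h : m = l
  · subst h; simp [vecMulVec_apply]
  · simp [h]

private lemma sumP_mul_aux {n k : ℕ} {e : Fin n → Fin n → ℂ} (he : ONB e)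
    (A B : Fin n → Matrix (Fin k) (Fin k) ℂ) :
    (∑ m, vecMulVec (e m) (star (e m)) ⊗ₖ A m) * (∑ m, vecMulVec (e m) (star (e m)) ⊗ₖ B m)
      = ∑ m, vecMulVec (e m) (star (e m)) ⊗ₖ (A m * B m) := by
  rw [Finset.sum_mul_sum]
  have : ∀ m l, (vecMulVec (e m) (star (e m)) ⊗ₖ A m) * (vecMulVec (e l) (star (e l)) ⊗ₖ B l)
      = if m = l then vecMulVec (e m) (star (e m)) ⊗ₖ (A m * B l) else 0 := by
    intro m l
    rw [← Matrix.mul_kronecker_mul, Pmul_aux he m l]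
    by_cases h : m = l
    · simp [h]
    · simp [h, Matrix.zero_kronecker]
  simp only [this]
  simp

private lemma sumP_one_aux {n : ℕ} {e : Fin n → Fin n → ℂ} (he : ONB e) :
    ∑ m, vecMulVec (e m) (star (e m)) = (1 : Matrix (Fin n) (Fin n) ℂ) := by
  have hM : (Matrix.of (fun m s => e m s)) * (Matrix.of (fun m s => e m s))ᴴ = 1 := by
    ext m m'
    rw [Matrix.mul_apply, Matrix.one_apply]
    have : ∀ s, (Matrix.of (fun m s => e m s)) m s * (Matrix.of (fun m s => e m s))ᴴ s m'
        = (starRingEnd ℂ) (star (e m s) * e m' s) := by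
      intro s
      simp [Matrix.conjTranspose_apply, mul_comm]
    rw [Finset.sum_congr rfl (fun s _ => this s), ← map_sum, he m m']
    by_cases h : m = m' <;> simp [h]
  have hM2 := mul_eq_one_comm.mp hM
  ext s t
  have := congrFun (congrFun hM2 s) t
  rw [Matrix.mul_apply] at this
  simp only [Matrix.conjTranspose_apply, Matrix.of_apply, Matrix.one_apply] at this ⊢
  rw [Matrix.sum_apply]
  have h2 : ∑ m, vecMulVec (e m) (star (e m)) s t
      = (starRingEnd ℂ) (∑ m, star (e m s) * e m t) := by
    rw [map_sum]
    apply Finset.sum_congr rfl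
    intro m _
    simp [vecMulVec_apply, mul_comm]
  rw [h2, this]
  by_cases h : s = t <;> simp [h]

private lemma extract_aux {n k : ℕ} {e : Fin n → Fin n → ℂ} (he : ONB e)
    (C : Fin n → Matrix (Fin k) (Fin k) ℂ) (M : Fin n) (s t : Fin k) :
    ∑ i, ∑ j, star (e M i) * e M j *
      ((∑ m, vecMulVec (e m) (star (e m)) ⊗ₖ C m) (i, s) (j, t)) = C M s t := by
  have h1 : ∀ i j, star (e M i) * e M j *
      ((∑ m, vecMulVec (e m) (star (e m)) ⊗ₖ C m) (i, s) (j, t))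
      = ∑ m, (star (e M i) * e m i) * ((e M j * star (e m j)) * C m s t) := by
    intro i j
    rw [Matrix.sum_apply, Finset.mul_sum]
    apply Finset.sum_congr rfl
    intro m _
    simp only [Matrix.kroneckerMap_apply, vecMulVec_apply, Pi.star_apply]
    ring
  calc ∑ i, ∑ j, star (e M i) * e M j *
        ((∑ m, vecMulVec (e m) (star (e m)) ⊗ₖ C m) (i, s) (j, t))
      = ∑ i, ∑ j, ∑ m, (star (e M i) * e m i) * ((e M j * star (e m j)) * C m s t) := by
        simp only [h1]
    _ = ∑ i, ∑ m, ∑ j, (star (e M i) * e m i) * ((e M j * star (e m j)) * C m s t) :=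
        Finset.sum_congr rfl fun i _ => Finset.sum_comm
    _ = ∑ m, ∑ i, ∑ j, (star (e M i) * e m i) * ((e M j * star (e m j)) * C m s t) :=
        Finset.sum_comm
    _ = ∑ m, (∑ i, star (e M i) * e m i) * ((∑ j, e M j * star (e m j)) * C m s t) := by
        apply Finset.sum_congr rfl
        intro m _
        rw [Finset.sum_mul]
        apply Finset.sum_congr rfl
        intro i _
        rw [← Finset.mul_sum, ← Finset.sum_mul]
    _ = C M s t := by
        have h2 : ∀ m, (∑ i, star (e M i) * e m i) * ((∑ j, e M j * star (e m j)) * C m s t)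
            = if m = M then C m s t else 0 := by
          intro m
          have hj : (∑ j, e M j * star (e m j)) = ∑ j, star (e m j) * e M j :=
            Finset.sum_congr rfl fun j _ => mul_comm _ _
          rw [hj, he M m, he m M]
          by_cases h : m = M
          · subst h; simp
          · simp [h, Ne.symm h]
        simp only [h2]
        simp

private lemma sumP_inj_aux {n k : ℕ} {e : Fin n → Fin n → ℂ} (he : ONB e)
    {A B : Fin n → Matrix (Fin k) (Fin k) ℂ}
    (h : ∑ m, vecMulVec (e m) (star (e m)) ⊗ₖ A m
        = ∑ m, vecMulVec (e m) (star (e m)) ⊗ₖ B m) (m : Fin n) : A m = B m := by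
  ext s t
  rw [← extract_aux he A m s t, h, extract_aux he B m s t]

/-- every circulant matrix of size `nk` belongs to
`ℳ^B_{block-diag}`; in particular every circulant unitary belongs to
`𝒰^B_{block-diag}`. -/
theorem stmt15 (n k : ℕ) (x : ZMod (n * k) → ℂ)
    (X : Matrix (Fin n × Fin k) (Fin n × Fin k) ℂ)
    (hX : ∀ (i : Fin n) (s : Fin k) (j : Fin n) (t : Fin k),
      X (i, s) (j, t) =
        x (((j.val * k + t.val : ℕ) : ZMod (n * k)) -
           ((i.val * k + s.val : ℕ) : ZMod (n * k)))) :
    memMB X ∧ (IsUnitary X → memUB X) := by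
  classical
  set e : Fin n → Fin n → ℂ := ee n with he_def
  have he : ONB e := onb_ee n
  set Xs : Fin n → Matrix (Fin k) (Fin k) ℂ := fun m => Matrix.of fun s t =>
    ∑ d : Fin n, Complex.exp (2 * Real.pi * Complex.I * ((m : ℕ) * (d : ℕ) : ℕ) / n) *
      x ((((d : ℕ) * k + (t : ℕ) : ℕ) : ZMod (n * k)) - (((s : ℕ) : ℕ) : ZMod (n * k)))
    with hXs_def
  have hrepr : X = ∑ m, vecMulVec (e m) (star (e m)) ⊗ₖ Xs m := by
    ext ⟨i, s⟩ ⟨j, t⟩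
    have hn : 0 < n := i.pos
    have hn' : (n : ℂ) ≠ 0 := Nat.cast_ne_zero.2 hn.ne'
    obtain ⟨d₀, hdvd0⟩ : ∃ d₀ : Fin n, (n : ℤ) ∣ ((i.val : ℤ) - j.val + d₀.val) := by
      refine ⟨⟨(j.val + n - i.val) % n, Nat.mod_lt _ hn⟩, ?_⟩
      have hq := Nat.div_add_mod (j.val + n - i.val) n
      set q := (j.val + n - i.val) / n with hqdef
      have hZ : ((j.val : ℤ) + n - i.val) = n * q + ((j.val + n - i.val) % n : ℕ) := by
        have hle : i.val ≤ j.val + n := by omega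
        have : ((j.val + n - i.val : ℕ) : ℤ) = n * q + ((j.val + n - i.val) % n : ℕ) := by
          exact_mod_cast hq.symm
        omega
      exact ⟨1 - q, by linear_combination -hZ⟩
    have hcond : ∀ d : Fin n, ((n : ℤ) ∣ ((i.val : ℤ) - j.val + d.val)) ↔ d = d₀ := by
      intro d
      constructor
      · rintro ⟨c, hc⟩
        obtain ⟨c', hc'⟩ := hdvd0
        have hdle := d.isLt
        have hd0le := d₀.isLt
        have h1 : (d.val : ℤ) - d₀.val = n * (c - c') := by linear_combination hc - hc'
        have h2 : (c - c' : ℤ) = 0 := by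
          have hnz : (0 : ℤ) < n := by exact_mod_cast hn
          have hdle' : (d.val : ℤ) < n := by exact_mod_cast d.isLt
          have hd0le' : (d₀.val : ℤ) < n := by exact_mod_cast d₀.isLt
          have hdnn : (0 : ℤ) ≤ d.val := Int.ofNat_nonneg _
          have hd0nn : (0 : ℤ) ≤ d₀.val := Int.ofNat_nonneg _
          rcases lt_trichotomy (c - c') 0 with h | h | h
          · exfalso
            have hm : (n : ℤ) * (c - c') ≤ n * (-1) :=
              mul_le_mul_of_nonneg_left (by omega) hnz.le
            linarith
          · exact h
          · exfalso
            have hm : (n : ℤ) * 1 ≤ n * (c - c') :=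
              mul_le_mul_of_nonneg_left (by omega) hnz.le
            linarith
        rw [h2, mul_zero] at h1
        exact Fin.ext (by omega)
      · rintro rfl; exact hdvd0
    have hterm : ∀ m : Fin n, (vecMulVec (e m) (star (e m)) ⊗ₖ Xs m) (i, s) (j, t)
        = ∑ d : Fin n,
            Complex.exp (2 * Real.pi * Complex.I *
              (((i.val : ℤ) - j.val + d.val : ℤ) : ℂ) * m / n) / n
            * x ((((d : ℕ) * k + (t : ℕ) : ℕ) : ZMod (n * k)) - ((s : ℕ) : ZMod (n * k))) := by
      intro m
      simp only [Matrix.kroneckerMap_apply, vecMulVec_apply, Pi.star_apply, hXs_def,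
        Matrix.of_apply, Finset.mul_sum]
      apply Finset.sum_congr rfl
      intro d _
      rw [show e m i * star (e m j) *
            (Complex.exp (2 * Real.pi * Complex.I * ((m : ℕ) * (d : ℕ) : ℕ) / n) *
              x ((((d : ℕ) * k + (t : ℕ) : ℕ) : ZMod (n * k)) - (((s : ℕ) : ℕ) : ZMod (n * k))))
          = (e m i * star (e m j) *
              Complex.exp (2 * Real.pi * Complex.I * ((m : ℕ) * (d : ℕ) : ℕ) / n)) *
              x ((((d : ℕ) * k + (t : ℕ) : ℕ) : ZMod (n * k)) - (((s : ℕ) : ℕ) : ZMod (n * k)))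
          from by ring]
      congr 1
      rw [he_def, ee_mul_star_ee, div_mul_eq_mul_div, ← Complex.exp_add]
      congr 2
      push_cast
      ring
    rw [Matrix.sum_apply]
    simp only [hterm]
    rw [Finset.sum_comm]
    have hinner : ∀ d : Fin n,
        (∑ m : Fin n, Complex.exp (2 * Real.pi * Complex.I *
            (((i.val : ℤ) - j.val + d.val : ℤ) : ℂ) * m / n) / n
          * x ((((d : ℕ) * k + (t : ℕ) : ℕ) : ZMod (n * k)) - ((s : ℕ) : ZMod (n * k))))
        = if d = d₀
            then x ((((d : ℕ) * k + (t : ℕ) : ℕ) : ZMod (n * k)) - ((s : ℕ) : ZMod (n * k)))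
            else 0 := by
      intro d
      rw [← Finset.sum_mul, ← Finset.sum_div, expsum_aux n hn ((i.val : ℤ) - j.val + d.val)]
      by_cases hdd : d = d₀
      · rw [if_pos ((hcond d).2 hdd), if_pos hdd, div_self hn', one_mul]
      · rw [if_neg (fun hc => hdd ((hcond d).1 hc)), if_neg hdd, zero_div, zero_mul]
    simp only [hinner]
    rw [Finset.sum_ite_eq' Finset.univ d₀
      (fun d => x ((((d : ℕ) * k + (t : ℕ) : ℕ) : ZMod (n * k)) - ((s : ℕ) : ZMod (n * k))))]
    rw [if_pos (Finset.mem_univ d₀), hX i s j t]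
    congr 1
    obtain ⟨c', hc'⟩ := hdvd0
    show (((j.val * k + t.val : ℕ)) : ZMod (n * k)) - ((i.val * k + s.val : ℕ))
        = (((d₀.val * k + t.val : ℕ)) : ZMod (n * k)) - ((s.val : ℕ))
    rw [show (((j.val * k + t.val : ℕ)) : ZMod (n * k)) = (((j.val * k + t.val : ℕ) : ℤ) : ZMod (n * k)) by push_cast; ring,
        show (((i.val * k + s.val : ℕ)) : ZMod (n * k)) = (((i.val * k + s.val : ℕ) : ℤ) : ZMod (n * k)) by push_cast; ring,
        show (((d₀.val * k + t.val : ℕ)) : ZMod (n * k)) = (((d₀.val * k + t.val : ℕ) : ℤ) : ZMod (n * k)) by push_cast; ring,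
        show (((s.val : ℕ)) : ZMod (n * k)) = (((s.val : ℕ) : ℤ) : ZMod (n * k)) by push_cast; ring]
    rw [← Int.cast_sub, ← Int.cast_sub, ZMod.intCast_eq_intCast_iff]
    rw [Int.modEq_iff_dvd]
    refine ⟨c', ?_⟩
    push_cast
    linear_combination (k : ℤ) * hc'
  refine ⟨⟨Xs, e, e, he, he, hrepr⟩, ?_⟩
  intro hU
  refine ⟨Xs, e, e, ?_, he, he, hrepr⟩
  intro m
  have hXH : Xᴴ = ∑ l, vecMulVec (e l) (star (e l)) ⊗ₖ (Xs l)ᴴ := by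
    rw [hrepr]
    ext ⟨i, s⟩ ⟨j, t⟩
    simp only [Matrix.conjTranspose_apply, Matrix.sum_apply, Matrix.kroneckerMap_apply,
      vecMulVec_apply, Pi.star_apply, map_sum]
    rw [star_sum]
    apply Finset.sum_congr rfl
    intro l _
    simp only [star_mul', star_star]
    ring
  have hone : (1 : Matrix (Fin n × Fin k) (Fin n × Fin k) ℂ)
      = ∑ l, vecMulVec (e l) (star (e l)) ⊗ₖ (1 : Matrix (Fin k) (Fin k) ℂ) := by
    ext ⟨i, s⟩ ⟨j, t⟩
    rw [Matrix.sum_apply]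
    have h3 : ∀ l, (vecMulVec (e l) (star (e l)) ⊗ₖ (1 : Matrix (Fin k) (Fin k) ℂ)) (i, s) (j, t)
        = vecMulVec (e l) (star (e l)) i j * (1 : Matrix (Fin k) (Fin k) ℂ) s t := fun l => rfl
    simp only [h3]
    rw [← Finset.sum_mul]
    have h4 := congrFun (congrFun (sumP_one_aux he) i) j
    rw [Matrix.sum_apply] at h4
    rw [h4]
    simp [Matrix.one_apply, Prod.ext_iff]
    by_cases h5 : i = j <;> by_cases h6 : s = t <;> simp [h5, h6]
  constructor
  · have h1 : ∑ l, vecMulVec (e l) (star (e l)) ⊗ₖ (Xs l * (Xs l)ᴴ)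
        = ∑ l, vecMulVec (e l) (star (e l)) ⊗ₖ (1 : Matrix (Fin k) (Fin k) ℂ) := by
      rw [← sumP_mul_aux he, ← hrepr, ← hXH, hU.1, hone]
    exact sumP_inj_aux he h1 m
  · have h1 : ∑ l, vecMulVec (e l) (star (e l)) ⊗ₖ ((Xs l)ᴴ * Xs l)
        = ∑ l, vecMulVec (e l) (star (e l)) ⊗ₖ (1 : Matrix (Fin k) (Fin k) ℂ) := by
      rw [← sumP_mul_aux he, ← hrepr, ← hXH, hU.2, hone]
    exact sumP_inj_aux he h1 m

end BipartiteUnitary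
end
end
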